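/- arXiv:1405.0045 — 7 statements merged into one kernel-verified Lean document; each statement's English description precedes it below -/
import Mathlib

section
/- Let p be an odd prime, η a primitive p-th root of unity in ℂ, and define ω = Σ{η^n : 1 ≤ n ≤ p−1, n is a quadratic residue mod p} and ω' = Σ{η^n : 1 ≤ n ≤ p−1, n is a quadratic nonresidue mod p}. Then ω + ω' = −1 and ω·ω' = (1 − χ(−1)p)/4, where χ(−1) = (−1)^((p−1)/2) is the Legendre symbol of −1. Consequently {ω, ω'} = {(−1 ± √(χ(−1)p))/2} for some choice of square root. -/
open Classical

lemma reindex_sum (p : ℕ) [NeZero p] (η : ℂ) (s : Finset ℕ) (t : Finset (ZMod p))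
    (hs : ∀ n ∈ s, 0 < n ∧ n < p)
    (hmem : ∀ n : ℕ, 0 < n → n < p → (n ∈ s ↔ (n : ZMod p) ∈ t))
    (ht : ∀ a ∈ t, a ≠ 0) :
    ∑ n ∈ s, η ^ n = ∑ a ∈ t, η ^ a.val := by
  refine Finset.sum_nbij' (fun n => (n : ZMod p)) (fun a => a.val) ?_ ?_ ?_ ?_ ?_
  · intro n hn
    exact (hmem n (hs n hn).1 (hs n hn).2).mp hn
  · intro a ha
    have hv : ((a.val : ℕ) : ZMod p) = a := by simp [ZMod.natCast_val, ZMod.cast_id]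
    have hpos : 0 < a.val :=
      Nat.pos_of_ne_zero (fun h => (ht a ha) ((ZMod.val_eq_zero a).mp h))
    exact (hmem a.val hpos (ZMod.val_lt a)).mpr (by rw [hv]; exact ha)
  · intro n hn
    exact ZMod.val_cast_of_lt (hs n hn).2
  · intro a _
    simp [ZMod.natCast_val, ZMod.cast_id]
  · intro n hn
    rw [ZMod.val_cast_of_lt (hs n hn).2]

/-- For p an odd prime and η a primitive p-th root of unity in ℂ, with
ω the sum of η^n over quadratic residues n (1 ≤ n ≤ p−1) and ω' the sum over
nonresidues, we have ω + ω' = −1 and ω·ω' = (1 − χ(−1)p)/4 where χ(−1)=(−1)^((p−1)/2);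
consequently {ω, ω'} = {(−1 ± √(χ(−1)p))/2}. -/
theorem stmt_3 (p : ℕ) (hp : p.Prime) (hodd : Odd p) (η : ℂ)
    (hη : IsPrimitiveRoot η p) (ω ω' : ℂ)
    (hω : ω = ∑ n ∈ (Finset.Ioo 0 p).filter
        (fun n : ℕ => ∃ m : ZMod p, m ≠ 0 ∧ m ^ 2 = (n : ZMod p)), η ^ (n : ℕ))
    (hω' : ω' = ∑ n ∈ (Finset.Ioo 0 p).filter
        (fun n : ℕ => ¬ ∃ m : ZMod p, m ^ 2 = (n : ZMod p)), η ^ (n : ℕ)) :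
    ω + ω' = -1 ∧
    ω * ω' = (1 - (-1 : ℂ) ^ ((p - 1) / 2) * p) / 4 ∧
    ∃ s : ℂ, s ^ 2 = (-1 : ℂ) ^ ((p - 1) / 2) * p ∧
      ({ω, ω'} : Set ℂ) = {(-1 + s) / 2, (-1 - s) / 2} := by
  haveI : Fact p.Prime := ⟨hp⟩
  haveI : NeZero p := ⟨hp.pos.ne'⟩
  have hp2 : p ≠ 2 := by rintro rfl; exact absurd (Nat.odd_iff.mp hodd) (by norm_num)
  set S : Finset (ZMod p) :=
    Finset.univ.filter (fun a : ZMod p => a ≠ 0 ∧ IsSquare a) with hS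
  set N : Finset (ZMod p) :=
    Finset.univ.filter (fun a : ZMod p => a ≠ 0 ∧ ¬ IsSquare a) with hN
  have hcast_ne : ∀ n : ℕ, 0 < n → n < p → ((n : ZMod p) ≠ 0) := by
    intro n h1 h2
    rw [Ne, ZMod.natCast_eq_zero_iff]
    exact fun hdvd => absurd (Nat.le_of_dvd h1 hdvd) (not_le.mpr h2)
  have hωS : ω = ∑ a ∈ S, η ^ a.val := by
    rw [hω]
    apply reindex_sum p η _ S
    · intro n hn
      simp only [Finset.mem_filter, Finset.mem_Ioo] at hn
      exact hn.1
    · intro n h1 h2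
      simp only [Finset.mem_filter, Finset.mem_Ioo, Finset.mem_univ, true_and, hS]
      constructor
      · rintro ⟨-, m, hm0, hm⟩
        exact ⟨hcast_ne n h1 h2, m, by rw [← hm]; ring⟩
      · rintro ⟨ha, m, hm⟩
        refine ⟨⟨h1, h2⟩, m, ?_, by rw [hm]; ring⟩
        rintro rfl
        exact ha (by rw [hm]; ring)
    · intro a ha
      rw [hS] at ha
      simp only [Finset.mem_filter, Finset.mem_univ, true_and] at ha
      exact ha.1
  have hω'N : ω' = ∑ a ∈ N, η ^ a.val := by
    rw [hω']
    apply reindex_sum p η _ N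
    · intro n hn
      simp only [Finset.mem_filter, Finset.mem_Ioo] at hn
      exact hn.1
    · intro n h1 h2
      simp only [Finset.mem_filter, Finset.mem_Ioo, Finset.mem_univ, true_and, hN]
      constructor
      · rintro ⟨-, hsq⟩
        refine ⟨hcast_ne n h1 h2, ?_⟩
        rintro ⟨m, hm⟩
        exact hsq ⟨m, by rw [hm]; ring⟩
      · rintro ⟨ha, hsq⟩
        refine ⟨⟨h1, h2⟩, ?_⟩
        rintro ⟨m, hm⟩
        exact hsq ⟨m, by rw [← hm]; ring⟩
    · intro a ha
      rw [hN] at ha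
      simp only [Finset.mem_filter, Finset.mem_univ, true_and] at ha
      exact ha.1
  -- the additive character
  have hη1 : η ^ p = 1 := hη.pow_eq_one
  set ψ : AddChar (ZMod p) ℂ := AddChar.zmodChar p hη1 with hψdef
  have hψprim : ψ.IsPrimitive := AddChar.zmodChar_primitive_of_primitive_root p hη
  have hψne : ψ ≠ 1 := by
    intro h
    have h1 := hψprim (one_ne_zero : (1 : ZMod p) ≠ 0)
    rw [AddChar.mulShift_one, h] at h1
    exact h1 rfl
  have hψa : ∀ a : ZMod p, ψ a = η ^ a.val := fun a => AddChar.zmodChar_apply hη1 a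
  have htotal : ∑ a : ZMod p, η ^ a.val = 0 := by
    rw [← Finset.sum_congr rfl (fun a _ => (hψa a))]
    exact AddChar.sum_eq_zero_of_ne_one hψne
  have herase : ∑ a ∈ Finset.univ.erase (0 : ZMod p), η ^ a.val = -1 := by
    have hadd := Finset.add_sum_erase Finset.univ (fun a : ZMod p => η ^ a.val)
      (Finset.mem_univ (0 : ZMod p))
    rw [htotal] at hadd
    simp only [ZMod.val_zero, pow_zero] at hadd
    linear_combination hadd
  -- ω + ω' = -1
  have hsum : ω + ω' = -1 := by
    rw [hωS, hω'N, hS, hN]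
    have h1 : Finset.univ.filter (fun a : ZMod p => a ≠ 0 ∧ IsSquare a)
        = (Finset.univ.filter (fun a : ZMod p => a ≠ 0)).filter (fun a => IsSquare a) := by
      rw [Finset.filter_filter]
    have h2 : Finset.univ.filter (fun a : ZMod p => a ≠ 0 ∧ ¬ IsSquare a)
        = (Finset.univ.filter (fun a : ZMod p => a ≠ 0)).filter (fun a => ¬ IsSquare a) := by
      rw [Finset.filter_filter]
    rw [h1, h2, Finset.sum_filter_add_sum_filter_not, Finset.filter_ne', herase]
  -- the quadratic character and Gauss sum
  set χ : MulChar (ZMod p) ℂ :=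
    (quadraticChar (ZMod p)).ringHomComp (Int.castRingHom ℂ) with hχdef
  have hchar : ringChar (ZMod p) ≠ 2 := by
    rw [ZMod.ringChar_zmod_n]; exact hp2
  have hχne : χ ≠ 1 :=
    (MulChar.ringHomComp_ne_one_iff (Int.castRingHom ℂ).injective_int).mpr
      (quadraticChar_ne_one hchar)
  have hχquad : χ.IsQuadratic := (quadraticChar_isQuadratic (ZMod p)).comp _
  have hg : gaussSum χ ψ = ω - ω' := by
    rw [hωS, hω'N, hS, hN, Finset.sum_filter, Finset.sum_filter, ← Finset.sum_sub_distrib,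
      gaussSum]
    apply Finset.sum_congr rfl
    intro a _
    rw [hψa]
    by_cases h0 : a = 0
    · subst h0
      have hz : χ 0 = 0 := MulChar.map_nonunit χ not_isUnit_zero
      simp [hz]
    · have hχa : χ a = ((quadraticChar (ZMod p) a : ℤ) : ℂ) := rfl
      by_cases hsq : IsSquare a
      · rw [if_pos ⟨h0, hsq⟩, if_neg (fun h => h.2 hsq), hχa,
          (quadraticChar_one_iff_isSquare h0).mpr hsq]
        simp
      · rw [if_neg (fun h => hsq h.2), if_pos ⟨h0, hsq⟩, hχa,
          quadraticChar_neg_one_iff_not_isSquare.mpr hsq]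
        push_cast
        ring
  have hχneg : χ (-1) = (-1 : ℂ) ^ ((p - 1) / 2) := by
    have h1 : quadraticChar (ZMod p) (-1) = ZMod.χ₄ (Fintype.card (ZMod p)) :=
      quadraticChar_neg_one hchar
    rw [ZMod.card] at h1
    have h2 : ZMod.χ₄ ((p : ℕ) : ZMod 4) = (-1 : ℤ) ^ (p / 2) :=
      ZMod.χ₄_eq_neg_one_pow (Nat.odd_iff.mp hodd)
    have h3 : p / 2 = (p - 1) / 2 := by obtain ⟨k, hk⟩ := hodd; omega
    have h4 : χ (-1) = ((quadraticChar (ZMod p) (-1) : ℤ) : ℂ) := rfl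
    rw [h4, h1, h2, h3]
    push_cast
    ring
  have hs2 : (ω - ω') ^ 2 = (-1 : ℂ) ^ ((p - 1) / 2) * p := by
    rw [← hg, gaussSum_sq hχne hχquad hψprim, hχneg, ZMod.card]
  refine ⟨hsum, ?_, ω - ω', hs2, ?_⟩
  · have h : ω * ω' = ((ω + ω') ^ 2 - (ω - ω') ^ 2) / 4 := by ring
    rw [h, hsum, hs2]
    ring
  · have hω1 : ω = (-1 + (ω - ω')) / 2 := by linear_combination hsum / 2
    have hω2 : ω' = (-1 - (ω - ω')) / 2 := by linear_combination hsum / 2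
    rw [← hω1, ← hω2]
end

section
/- Let G be a finite abelian group of order v and D ⊂ G a GSHDS with k₀ = 0 (i.e., D(x)D(x^{n₀}) = −λ·1 + λ·G(x) and D(x) + D(x^{n₀}) = G(x) − 1). Then D(x^{−1}) = D(x), and D is a partial difference set with parameters (v, (v−1)/2, (v−5)/4, (v−1)/4) (Paley parameters); moreover λ = (v−1)/4. -/
open Finset
open scoped Classical

/-- `DS n D` represents `D(xⁿ) = ∑_{g ∈ D} x^{n·g}` in the integral group algebra `ℤ[G]`. -/
noncomputable def DS {G : Type} [AddCommGroup G] (n : ℤ) (D : Finset G) :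
    AddMonoidAlgebra ℤ G := ∑ g ∈ D, AddMonoidAlgebra.single (n • g) 1

/-- `GS G` represents `G(x) = ∑_{g ∈ G} x^g` in `ℤ[G]`. -/
noncomputable def GS (G : Type) [AddCommGroup G] [Fintype G] :
    AddMonoidAlgebra ℤ G := ∑ g : G, AddMonoidAlgebra.single g 1

/-- The augmentation ring homomorphism `ℤ[G] → ℤ`. -/
noncomputable def aug (G : Type) [AddCommGroup G] : AddMonoidAlgebra ℤ G →+* ℤ :=
  AddMonoidAlgebra.liftNCRingHom (RingHom.id ℤ) 1 (fun {_ _} => Commute.all _ _)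

lemma ama_congr_fun {G : Type} [AddCommGroup G] {f g : AddMonoidAlgebra ℤ G}
    (h : f = g) (x : G) : f.coeff x = g.coeff x := congrArg (fun p : AddMonoidAlgebra ℤ G => p.coeff x) h

lemma aug_single {G : Type} [AddCommGroup G] (a : G) (b : ℤ) :
    aug G (AddMonoidAlgebra.single a b) = b := by
  simp [aug, AddMonoidAlgebra.liftNCRingHom]

lemma aug_DS {G : Type} [AddCommGroup G] (n : ℤ) (D : Finset G) :
    aug G (DS n D) = D.card := by
  rw [DS, map_sum]
  simp [aug_single]

lemma aug_GS (G : Type) [AddCommGroup G] [Fintype G] :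
    aug G (GS G) = Fintype.card G := by
  rw [GS, map_sum]
  simp only [aug_single]
  rw [Finset.sum_const, nsmul_eq_mul, mul_one, Fintype.card]

lemma smul_eq_cast_mul {G : Type} [AddCommGroup G] (c : ℤ) (x : AddMonoidAlgebra ℤ G) :
    c • x = (c : AddMonoidAlgebra ℤ G) * x := by
  rw [zsmul_eq_mul]

lemma single_mul_GS {G : Type} [AddCommGroup G] [Fintype G] (a : G) :
    AddMonoidAlgebra.single a (1 : ℤ) * GS G = GS G := by
  rw [GS, Finset.mul_sum]
  simp only [AddMonoidAlgebra.single_mul_single, one_mul]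
  exact Fintype.sum_equiv (Equiv.addLeft a) _ _ (fun g => rfl)

lemma DS_mul_GS {G : Type} [AddCommGroup G] [Fintype G] (D : Finset G) :
    DS 1 D * GS G = ((D.card : ℤ) : AddMonoidAlgebra ℤ G) * GS G := by
  rw [DS, Finset.sum_mul]
  simp only [one_smul, single_mul_GS]
  rw [← smul_eq_cast_mul, Finset.sum_const, natCast_zsmul]

lemma GS_apply {G : Type} [AddCommGroup G] [Fintype G] (x : G) : (GS G).coeff x = 1 := by
  rw [GS, AddMonoidAlgebra.coeff_sum, Finset.sum_apply']
  simp [AddMonoidAlgebra.coeff_single, Finsupp.single_apply]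

lemma one_apply' {G : Type} [AddCommGroup G] (x : G) :
    (1 : AddMonoidAlgebra ℤ G).coeff x = if x = 0 then 1 else 0 := by
  rw [AddMonoidAlgebra.one_def, AddMonoidAlgebra.coeff_single, Finsupp.single_apply]
  simp [eq_comm]

lemma DS_one_apply {G : Type} [AddCommGroup G] (D : Finset G) (x : G) :
    (DS 1 D).coeff x = if x ∈ D then 1 else 0 := by
  rw [DS, AddMonoidAlgebra.coeff_sum, Finset.sum_apply']
  simp [AddMonoidAlgebra.coeff_single, Finsupp.single_apply]

lemma DS_apply {G : Type} [AddCommGroup G] (n : ℤ) (D : Finset G) (x : G) :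
    (DS n D).coeff x = ∑ g ∈ D, if n • g = x then (1 : ℤ) else 0 := by
  rw [DS, AddMonoidAlgebra.coeff_sum, Finset.sum_apply']
  simp [AddMonoidAlgebra.coeff_single, Finsupp.single_apply]

/-- A GSHDS D with k₀ = 0 satisfies D(x⁻¹) = D(x) and is a Paley-type
partial difference set with parameters (v, (v−1)/2, (v−5)/4, (v−1)/4); moreover
λ = (v−1)/4. -/
theorem stmt_5 (G : Type) [AddCommGroup G] [Fintype G]
    (D : Finset G) (n₀ lam v : ℤ) (hv : v = (Fintype.card G : ℤ))
    (hunit : IsUnit (n₀ : ZMod (AddMonoid.exponent G)))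
    (hnres : ¬ ∃ m : ZMod (AddMonoid.exponent G),
      m ^ 2 = (n₀ : ZMod (AddMonoid.exponent G)))
    (hk : (D.card : ℤ) = (v - 1) / 2)
    (h1 : DS 1 D * DS n₀ D
        = (-lam) • (1 : AddMonoidAlgebra ℤ G) + lam • GS G)
    (h2 : DS 1 D + DS n₀ D = GS G - 1) :
    DS (-1) D = DS 1 D ∧
    lam = (v - 1) / 4 ∧
    DS 1 D * DS (-1) D = (D.card : ℤ) • (1 : AddMonoidAlgebra ℤ G)
      + ((v - 5) / 4) • DS 1 D + ((v - 1) / 4) • (GS G - 1 - DS 1 D) := by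
  -- pointwise version of h2
  have h2x : ∀ x : G, (DS 1 D).coeff x + (DS n₀ D).coeff x
      = 1 - (if x = 0 then (1:ℤ) else 0) := by
    intro x
    have := ama_congr_fun h2 x
    rw [AddMonoidAlgebra.coeff_add, Finsupp.add_apply] at this
    rw [this, AddMonoidAlgebra.coeff_sub, Finsupp.sub_apply, GS_apply, one_apply']
  -- product expansion
  have hprod : DS 1 D * DS n₀ D
      = ∑ a ∈ D, ∑ b ∈ D, AddMonoidAlgebra.single (a + n₀ • b) (1:ℤ) := by
    rw [DS, DS, Finset.sum_mul_sum]
    simp [AddMonoidAlgebra.single_mul_single]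
  -- coefficient of h1 at 0 : no a, b in D with a + n₀ • b = 0
  have hc0 : ∀ a ∈ D, ∀ b ∈ D, a + n₀ • b ≠ 0 := by
    have hL : (DS 1 D * DS n₀ D).coeff (0:G)
        = ∑ a ∈ D, ∑ b ∈ D, (if a + n₀ • b = 0 then (1:ℤ) else 0) := by
      rw [hprod, AddMonoidAlgebra.coeff_sum, Finset.sum_apply']
      refine Finset.sum_congr rfl fun a _ => ?_
      rw [AddMonoidAlgebra.coeff_sum, Finset.sum_apply']
      exact Finset.sum_congr rfl fun b _ => Finsupp.single_apply
    have hR : ((-lam) • (1 : AddMonoidAlgebra ℤ G) + lam • GS G).coeff (0:G) = 0 := by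
      rw [AddMonoidAlgebra.coeff_add, AddMonoidAlgebra.coeff_smul, AddMonoidAlgebra.coeff_smul,
        Finsupp.add_apply, Finsupp.smul_apply, Finsupp.smul_apply, GS_apply,
        one_apply', if_pos rfl]
      simp
    have h0 : ∑ a ∈ D, ∑ b ∈ D, (if a + n₀ • b = 0 then (1:ℤ) else 0) = 0 := by
      rw [← hL]
      rw [show (DS 1 D * DS n₀ D).coeff (0:G)
          = ((-lam) • (1 : AddMonoidAlgebra ℤ G) + lam • GS G).coeff (0:G) from
        ama_congr_fun h1 0]
      exact hR
    intro a ha b hb hab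
    have h1' := (Finset.sum_eq_zero_iff_of_nonneg (fun a _ =>
      Finset.sum_nonneg fun b _ => by positivity)).mp h0 a ha
    have h2' := (Finset.sum_eq_zero_iff_of_nonneg (fun b _ => by positivity)).mp h1' b hb
    rw [if_pos hab] at h2'
    exact one_ne_zero h2'
  -- 0 ∉ D
  have hD0 : (0:G) ∉ D := by
    intro h0
    have := h2x 0
    rw [DS_one_apply, if_pos h0, if_pos rfl, DS_apply] at this
    have hnn : (0:ℤ) ≤ ∑ g ∈ D, if n₀ • g = (0:G) then (1:ℤ) else 0 :=
      Finset.sum_nonneg fun g _ => by positivity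
    omega
  -- D is symmetric
  have hneg : ∀ g ∈ D, -g ∈ D := by
    intro g hg
    by_contra hng
    have hgne : -g ≠ (0:G) := by
      intro h; rw [neg_eq_zero] at h; exact hD0 (h ▸ hg)
    have := h2x (-g)
    rw [DS_one_apply, if_neg hng, if_neg hgne, DS_apply] at this
    have hex : ∃ b ∈ D, n₀ • b = -g := by
      by_contra hne
      push_neg at hne
      rw [Finset.sum_eq_zero (fun b hb => if_neg (hne b hb))] at this
      omega
    obtain ⟨b, hb, hbe⟩ := hex
    exact hc0 g hg b hb (by rw [hbe, add_neg_cancel])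
  -- first conjunct
  have conj1 : DS (-1) D = DS 1 D := by
    rw [DS, DS]
    simp only [neg_smul, one_smul, neg_zsmul, one_zsmul]
    exact Finset.sum_nbij' (fun g => -g) (fun g => -g)
      (fun a ha => hneg a ha)
      (fun a ha => hneg a ha)
      (fun a _ => neg_neg a) (fun a _ => neg_neg a)
      (fun a _ => by simp)
  -- augmentation equations
  have ha2 : (D.card : ℤ) + D.card = v - 1 := by
    have := congrArg (aug G) h2
    rw [map_add, map_sub, map_one, aug_DS, aug_DS, aug_GS, ← hv] at this
    linarith
  have ha1 : (D.card : ℤ) * D.card = -lam + lam * v := by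
    have := congrArg (aug G) h1
    rw [map_mul, map_add, aug_DS, aug_DS] at this
    rw [smul_eq_cast_mul, smul_eq_cast_mul, map_mul, map_mul, map_one,
      map_intCast, map_intCast, aug_GS, ← hv] at this
    push_cast at this
    linarith
  -- v ≠ 1
  have hv1 : v ≠ 1 := by
    intro h
    have hcard : Fintype.card G = 1 := by omega
    have : Subsingleton G := by
      rw [← Fintype.card_le_one_iff_subsingleton, hcard]
    have hexp : AddMonoid.exponent G = 1 := AddMonoid.exp_eq_one_of_subsingleton
    apply hnres
    refine ⟨0, ?_⟩
    have : Subsingleton (ZMod (AddMonoid.exponent G)) := by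
      rw [hexp]; infer_instance
    exact Subsingleton.elim _ _
  -- k = 2 lam
  have hk0 : (D.card : ℤ) ≠ 0 := by
    intro h
    rw [h] at ha2
    omega
  have hkl : (D.card : ℤ) = 2 * lam := by
    have : (D.card : ℤ) * D.card = (2 * lam) * D.card := by
      have hveq : v = 2 * D.card + 1 := by omega
      rw [ha1, hveq]; ring
    exact mul_right_cancel₀ hk0 this
  have hlam : lam = (v - 1) / 4 := by omega
  have hlam2 : (v - 5) / 4 = lam - 1 := by omega
  refine ⟨conj1, hlam, ?_⟩
  -- third conjunct
  rw [conj1, ← hlam, hlam2]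
  rw [smul_eq_cast_mul, smul_eq_cast_mul, smul_eq_cast_mul]
  rw [hkl]
  have hDG := DS_mul_GS D
  rw [hkl] at hDG
  rw [smul_eq_cast_mul, smul_eq_cast_mul] at h1
  push_cast at hDG h1 ⊢
  linear_combination DS 1 D * h2 - h1 + hDG
end

section
/- Let G be a finite abelian group and D ⊂ G a GSHDS, and χ a nonprincipal character of G. Then χ(D) satisfies the quadratic equation X² + X + (k₀ − λ) = 0; in particular, if k₀ = 0 then χ(D) = (−1 ± √v)/2, and if k₀ = k then χ(D) = (−1 ± √(−v))/2, where v = |G|. -/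
open Finset

/-- The algebra map `ℤ[G] → ℂ` induced by an additive character. -/
noncomputable def Phi {G : Type} [AddCommGroup G] (ψ : AddChar G ℂ) :
    AddMonoidAlgebra ℤ G →ₐ[ℤ] ℂ :=
  AddMonoidAlgebra.lift ℤ ℂ G (AddChar.toMonoidHomEquiv ψ)

lemma Phi_single {G : Type} [AddCommGroup G] (ψ : AddChar G ℂ) (a : G) :
    Phi ψ (AddMonoidAlgebra.single a (1 : ℤ)) = ψ a := by
  simp [Phi, AddMonoidAlgebra.lift_single]

lemma Phi_DS {G : Type} [AddCommGroup G] (ψ : AddChar G ℂ) (n : ℤ) (D : Finset G) :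
    Phi ψ (DS n D) = ∑ g ∈ D, ψ (n • g) := by
  simp [DS, map_sum, Phi_single]

lemma Phi_GS {G : Type} [AddCommGroup G] [Fintype G] (ψ : AddChar G ℂ) :
    Phi ψ (GS G) = ∑ g : G, ψ g := by
  simp [GS, map_sum, Phi_single]

/-- For a GSHDS D and any nonprincipal character χ of G, χ(D) satisfies
X² + X + (k₀ − λ) = 0; if k₀ = 0 then χ(D) = (−1 ± √v)/2, and if k₀ = k then
χ(D) = (−1 ± √(−v))/2, where v = |G|. -/
theorem stmt_8 (G : Type) [AddCommGroup G] [Fintype G]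
    (D : Finset G) (n₀ k₀ lam : ℤ)
    (hunit : IsUnit (n₀ : ZMod (AddMonoid.exponent G)))
    (hnres : ¬ ∃ m : ZMod (AddMonoid.exponent G),
      m ^ 2 = (n₀ : ZMod (AddMonoid.exponent G)))
    (hk : (D.card : ℤ) = ((Fintype.card G : ℤ) - 1) / 2)
    (h1 : DS 1 D * DS n₀ D
        = (k₀ - lam) • (1 : AddMonoidAlgebra ℤ G) + lam • GS G)
    (h2 : DS 1 D + DS n₀ D = GS G - 1)
    (χ : AddChar G ℂ) (hχ : ∃ g : G, χ g ≠ 1) :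
    (∑ g ∈ D, χ g) ^ 2 + (∑ g ∈ D, χ g) + ((k₀ : ℂ) - (lam : ℂ)) = 0 ∧
    (k₀ = 0 → ∃ s : ℂ, s ^ 2 = (Fintype.card G : ℂ) ∧
      ((∑ g ∈ D, χ g) = (-1 + s) / 2 ∨ (∑ g ∈ D, χ g) = (-1 - s) / 2)) ∧
    (k₀ = (D.card : ℤ) → ∃ s : ℂ, s ^ 2 = -(Fintype.card G : ℂ) ∧
      ((∑ g ∈ D, χ g) = (-1 + s) / 2 ∨ (∑ g ∈ D, χ g) = (-1 - s) / 2)) := by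
  set S : ℂ := ∑ g ∈ D, χ g with hS
  set T : ℂ := ∑ g ∈ D, χ (n₀ • g) with hT
  -- χ is nontrivial, so its sum over G vanishes
  have hχsum : ∑ g : G, χ g = 0 := by
    rw [AddChar.sum_eq_zero_iff_ne_zero]
    exact AddChar.ne_zero_iff.2 hχ
  -- apply Phi χ to h1 and h2
  have e1 : S * T = ((k₀ : ℂ) - lam) := by
    have := congrArg (Phi χ) h1
    simpa [map_mul, Phi_DS, Phi_GS, hχsum, one_smul] using this
  have e2 : S + T = -1 := by
    have := congrArg (Phi χ) h2
    simpa [Phi_DS, Phi_GS, hχsum, one_smul, sub_eq_iff_eq_add] using this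
  have hquad : S ^ 2 + S + ((k₀ : ℂ) - (lam : ℂ)) = 0 := by
    have hT' : T = -1 - S := by linear_combination e2
    linear_combination -e1 + S * hT'
  -- apply the trivial character
  have hk' : Phi (1 : AddChar G ℂ) (DS 1 D) = (D.card : ℂ) := by
    simp [Phi_DS]
  have hkn : Phi (1 : AddChar G ℂ) (DS n₀ D) = (D.card : ℂ) := by
    simp [Phi_DS]
  have hv : Phi (1 : AddChar G ℂ) (GS G) = (Fintype.card G : ℂ) := by
    simp [Phi_GS]
  set k : ℂ := (D.card : ℂ)
  set v : ℂ := (Fintype.card G : ℂ)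
  have f1 : k * k = ((k₀ : ℂ) - lam) + lam * v := by
    have := congrArg (Phi (1 : AddChar G ℂ)) h1
    simpa [map_mul, hk', hkn, hv] using this
  have f2 : k + k = v - 1 := by
    have := congrArg (Phi (1 : AddChar G ℂ)) h2
    simpa [hk', hkn, hv, sub_eq_iff_eq_add] using this
  have hv1 : v - 1 ≠ 0 := by
    have hcard : 1 < Fintype.card G := by
      by_contra h
      push_neg at h
      obtain ⟨g, hg⟩ := hχ
      have : g = 0 := by
        have := Fintype.card_le_one_iff.mp h g 0
        exact this
      rw [this] at hg
      exact hg (AddChar.map_zero_eq_one χ)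
    have : (Fintype.card G : ℂ) ≠ 1 := by
      exact_mod_cast (Nat.ne_of_gt hcard)
    simpa [v, sub_eq_zero] using this
  refine ⟨hquad, ?_, ?_⟩
  · intro hk0
    subst hk0
    push_cast at f1 hquad
    refine ⟨2 * S + 1, ?_, Or.inl (by ring)⟩
    have key : (4 * (lam : ℂ)) * (v - 1) = (v - 1) * (v - 1) := by
      linear_combination (-4) * f1 + (2 * k + v - 1) * f2
    have hlam : 4 * (lam : ℂ) = v - 1 := mul_right_cancel₀ hv1 key
    linear_combination 4 * hquad + hlam
  · intro hk0
    have hk0' : (k₀ : ℂ) = k := by rw [hk0]; push_cast [k]; ring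
    rw [hk0'] at f1 hquad
    refine ⟨2 * S + 1, ?_, Or.inl (by ring)⟩
    have key : (4 * (lam : ℂ)) * (v - 1) = (v - 3) * (v - 1) := by
      linear_combination (-4) * f1 + (2 * k + v - 3) * f2
    have hlam : 4 * (lam : ℂ) = v - 3 := mul_right_cancel₀ hv1 key
    linear_combination 4 * hquad + hlam - 2 * f2
end

section
/- Let G be a finite abelian group admitting a GSHDS D. Then |G| is not a perfect square. -/
open Finset

section Aux
open Polynomial

lemma sum_pow_eq_of_rational {N n' : ℕ} (hN : N ≠ 0) (hco : Nat.Coprime n' N)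
    {ι : Type} (s : Finset ι) (f : ι → ℂ) (hf : ∀ i ∈ s, f i ^ N = 1)
    (q : ℚ) (hq : ∑ i ∈ s, f i = (q : ℂ)) :
    ∑ i ∈ s, f i ^ n' = (q : ℂ) := by
  have : NeZero N := ⟨hN⟩
  have hNpos : 0 < N := Nat.pos_of_ne_zero hN
  have hμ : IsPrimitiveRoot (Complex.exp (2 * Real.pi * Complex.I / N)) N :=
    Complex.isPrimitiveRoot_exp N hN
  set μ := Complex.exp (2 * Real.pi * Complex.I / N) with hμdef
  choose a ha hpow using fun i : {x // x ∈ s} => hμ.eq_pow_of_pow_eq_one (hf i.1 i.2)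
  set P : ℚ[X] := (∑ i ∈ s.attach, (X : ℚ[X]) ^ (a i)) - C q with hP
  have haeval : aeval μ P = 0 := by
    rw [hP, map_sub, map_sum]
    have h1 : ∑ i ∈ s.attach, aeval μ ((X : ℚ[X]) ^ (a i)) = ∑ i ∈ s.attach, f i.1 := by
      refine sum_congr rfl fun i _ => ?_
      rw [map_pow, aeval_X, hpow i]
    rw [h1, Finset.sum_attach s f, hq, aeval_C]
    simp
  have hdvd : minpoly ℚ μ ∣ P := minpoly.dvd ℚ μ haeval
  have hμ' : IsPrimitiveRoot (μ ^ n') N := hμ.pow_of_coprime n' hco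
  have hmins : minpoly ℚ μ = minpoly ℚ (μ ^ n') := by
    rw [← Polynomial.cyclotomic_eq_minpoly_rat hμ hNpos,
      Polynomial.cyclotomic_eq_minpoly_rat hμ' hNpos]
  have haeval' : aeval (μ ^ n') P = 0 := by
    obtain ⟨R, hR⟩ := hdvd
    rw [hR, map_mul, hmins, minpoly.aeval, zero_mul]
  rw [hP, map_sub, map_sum, aeval_C] at haeval'
  have h2 : ∑ i ∈ s.attach, aeval (μ ^ n') ((X : ℚ[X]) ^ (a i)) =
      ∑ i ∈ s.attach, f i.1 ^ n' := by
    refine sum_congr rfl fun i _ => ?_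
    rw [map_pow, aeval_X, ← hpow i, ← pow_mul, ← pow_mul, mul_comm]
  rw [h2, Finset.sum_attach s (fun i => f i ^ n')] at haeval'
  have : algebraMap ℚ ℂ q = (q : ℂ) := by norm_cast
  rw [this] at haeval'
  linear_combination haeval'

end Aux

/-- A finite abelian group admitting a GSHDS cannot have square order. -/
theorem stmt_9 (G : Type) [AddCommGroup G] [Fintype G]
    (D : Finset G) (n₀ k₀ lam : ℤ)
    (hunit : IsUnit (n₀ : ZMod (AddMonoid.exponent G)))
    (hnres : ¬ ∃ m : ZMod (AddMonoid.exponent G),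
      m ^ 2 = (n₀ : ZMod (AddMonoid.exponent G)))
    (h1 : DS 1 D * DS n₀ D
        = (k₀ - lam) • (1 : AddMonoidAlgebra ℤ G) + lam • GS G)
    (h2 : DS 1 D + DS n₀ D = GS G - 1) :
    ¬ ∃ m : ℕ, Fintype.card G = m ^ 2 := by
  classical
  rintro ⟨m, hm⟩
  set N := AddMonoid.exponent G with hNdef
  have hNne : N ≠ 0 := AddMonoid.exponent_ne_zero_of_finite
  haveI : NeZero N := ⟨hNne⟩
  have hNsmul : ∀ g : G, N • g = 0 := fun g => AddMonoid.exponent_nsmul_eq_zero g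
  set v := Fintype.card G with hv
  set k := D.card with hk
  -- the reduced exponent n' : ℕ
  set n' : ℕ := (n₀ : ZMod N).val with hn'
  obtain ⟨u, hu⟩ := id hunit
  have hco : Nat.Coprime n' N := by
    rw [hn', ← hu]
    exact ZMod.val_coe_unit_coprime u
  have hcast : ((n' : ℕ) : ZMod N) = (n₀ : ZMod N) := by
    rw [hn', ZMod.natCast_val, ZMod.cast_id]
  have hsmul : ∀ g : G, n₀ • g = n' • g := by
    intro g
    have hdvd : (N : ℤ) ∣ (n₀ - n') := by
      rw [← ZMod.intCast_zmod_eq_zero_iff_dvd]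
      push_cast
      rw [hcast]
      ring
    obtain ⟨t, ht⟩ := hdvd
    have hn : n₀ = (n' : ℤ) + (N : ℤ) * t := by linarith
    rw [hn, add_smul, natCast_zsmul, mul_smul, natCast_zsmul, hNsmul, add_zero]
  have hzero : ∀ g : G, n₀ • g = 0 → g = 0 := by
    intro g hg
    set b : ℕ := ((u⁻¹ : (ZMod N)ˣ) : ZMod N).val with hb
    have h1' : (n₀ : ZMod N) * (b : ZMod N) = 1 := by
      rw [hb, ZMod.natCast_val, ZMod.cast_id, ← hu]
      exact u.mul_inv
    have hdvd : (N : ℤ) ∣ (n₀ * b - 1) := by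
      rw [← ZMod.intCast_zmod_eq_zero_iff_dvd]
      push_cast
      rw [h1']
      ring
    obtain ⟨t, ht⟩ := hdvd
    have hmul : n₀ * (b : ℤ) = 1 + N * t := by linarith
    have hg' : (n₀ * (b : ℤ)) • g = g := by
      rw [hmul, add_smul, one_smul, mul_smul, natCast_zsmul, hNsmul, add_zero]
    rw [mul_comm, mul_smul, hg, smul_zero] at hg'
    exact hg'.symm
  -- character evaluations
  have hφs : ∀ (ψ : AddChar G ℂ) (a : G),
      (AddMonoidAlgebra.lift ℤ ℂ G ψ.toMonoidHom) (AddMonoidAlgebra.single a 1) = ψ a := by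
    intro ψ a
    rw [AddMonoidAlgebra.lift_single]
    simp
  have hDS : ∀ (ψ : AddChar G ℂ) (n : ℤ),
      (AddMonoidAlgebra.lift ℤ ℂ G ψ.toMonoidHom) (DS n D) = ∑ g ∈ D, ψ (n • g) := by
    intro ψ n
    rw [DS, map_sum]
    exact sum_congr rfl fun g _ => hφs ψ (n • g)
  have hGS : ∀ ψ : AddChar G ℂ,
      (AddMonoidAlgebra.lift ℤ ℂ G ψ.toMonoidHom) (GS G) = ∑ g : G, ψ g := by
    intro ψ
    rw [GS, map_sum]
    exact sum_congr rfl fun g _ => hφs ψ g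
  have E2 : ∀ ψ : AddChar G ℂ,
      (∑ g ∈ D, ψ g) + (∑ g ∈ D, ψ (n₀ • g)) = (∑ g : G, ψ g) - 1 := by
    intro ψ
    have h := congrArg (AddMonoidAlgebra.lift ℤ ℂ G ψ.toMonoidHom) h2
    rw [map_add, map_sub, map_one, hDS, hDS, hGS] at h
    simpa [one_smul] using h
  have E1 : ∀ ψ : AddChar G ℂ,
      (∑ g ∈ D, ψ g) * (∑ g ∈ D, ψ (n₀ • g))
        = ((k₀ - lam : ℤ) : ℂ) + (lam : ℂ) * (∑ g : G, ψ g) := by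
    intro ψ
    have h := congrArg (AddMonoidAlgebra.lift ℤ ℂ G ψ.toMonoidHom) h1
    rw [map_mul, map_add, map_zsmul, map_zsmul, map_one, hDS, hDS, hGS] at h
    simp only [one_smul] at h
    rw [h, zsmul_eq_mul, zsmul_eq_mul, mul_one]
  have hkv : (v : ℤ) = 2 * (k : ℤ) + 1 := by
    have h := E2 0
    simp only [AddChar.zero_apply, Finset.sum_const, nsmul_eq_mul, mul_one,
      Finset.card_univ] at h
    have h' : ((2 * (k : ℤ) + 1 : ℤ) : ℂ) = ((Fintype.card G : ℕ) : ℂ) := by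
      push_cast
      linear_combination h
    exact_mod_cast h'.symm
  by_cases hk0 : k = 0
  · have hv1 : v = 1 := by omega
    have hsub : Subsingleton G := by
      have hle : Fintype.card G ≤ 1 := le_of_eq hv1
      exact Fintype.card_le_one_iff_subsingleton.mp hle
    have hN1 : N = 1 := by
      refine Nat.dvd_one.mp (AddMonoid.exponent_dvd_iff_forall_nsmul_eq_zero.mpr fun g => ?_)
      rw [one_nsmul]
      exact Subsingleton.elim g 0
    refine hnres ⟨0, ?_⟩
    have hzz : Subsingleton (ZMod N) := by rw [hN1]; infer_instance
    exact Subsingleton.elim _ _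
  have hkpos : 0 < k := Nat.pos_of_ne_zero hk0
  set X : AddChar G ℂ → ℂ := fun ψ => ∑ g ∈ D, ψ g with hXdef
  set Y : AddChar G ℂ → ℂ := fun ψ => ∑ g ∈ D, ψ (n₀ • g) with hYdef
  have hGsum : ∀ ψ : AddChar G ℂ, ψ ≠ 0 → ∑ g : G, ψ g = 0 := fun ψ hψ =>
    AddChar.sum_eq_zero_iff_ne_zero.mpr hψ
  have hcol : ∀ a : G, ∑ ψ : AddChar G ℂ, ψ a = if a = 0 then ((Fintype.card G : ℕ) : ℂ) else 0 :=
    fun a => AddChar.sum_apply_eq_ite a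
  have hcard : Fintype.card (AddChar G ℂ) = v := AddChar.card_eq
  have h0D : (0 : G) ∉ D := by
    intro h0
    have hs : ∑ ψ : AddChar G ℂ, (X ψ + Y ψ) = ∑ ψ : AddChar G ℂ, ((∑ g : G, ψ g) - 1) :=
      Finset.sum_congr rfl fun ψ _ => E2 ψ
    have hXs : ∑ ψ : AddChar G ℂ, X ψ = (v : ℂ) := by
      rw [hXdef, Finset.sum_comm]
      rw [Finset.sum_congr rfl (fun g (_ : g ∈ D) => hcol g),
        Finset.sum_ite_eq' D (0 : G) (fun _ => ((Fintype.card G : ℕ) : ℂ))]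
      simp [h0, hv]
    have hYs : ∑ ψ : AddChar G ℂ, Y ψ = (v : ℂ) := by
      rw [hYdef, Finset.sum_comm]
      have h1' : ∀ g ∈ D, ∑ ψ : AddChar G ℂ, ψ (n₀ • g)
          = if g = 0 then ((Fintype.card G : ℕ) : ℂ) else 0 := by
        intro g _
        rw [hcol (n₀ • g)]
        exact if_congr ⟨hzero g, fun h => by rw [h, smul_zero]⟩ rfl rfl
      rw [Finset.sum_congr rfl h1', Finset.sum_ite_eq' D (0 : G) (fun _ => ((Fintype.card G : ℕ) : ℂ))]
      simp [h0, hv]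
    have hRs : ∑ ψ : AddChar G ℂ, ((∑ g : G, ψ g) - 1) = 0 := by
      rw [Finset.sum_sub_distrib, Finset.sum_comm]
      rw [Finset.sum_congr rfl (fun g (_ : g ∈ (univ : Finset G)) => hcol g),
        Finset.sum_ite_eq' univ (0 : G) (fun _ => ((Fintype.card G : ℕ) : ℂ))]
      simp [hcard, hv]
    rw [Finset.sum_add_distrib, hXs, hYs, hRs] at hs
    have hvC : ((2 * v : ℕ) : ℂ) = ((0 : ℕ) : ℂ) := by push_cast; linear_combination hs
    have : 2 * v = 0 := by exact_mod_cast hvC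
    omega
  have hpar : ∑ ψ : AddChar G ℂ, (X ψ * (starRingEnd ℂ) (X ψ)) = (v : ℂ) * k := by
    have step1 : ∀ ψ : AddChar G ℂ,
        X ψ * (starRingEnd ℂ) (X ψ) = ∑ a ∈ D, ∑ b ∈ D, ψ (a + -b) := by
      intro ψ
      rw [hXdef]
      simp only [map_sum]
      rw [Finset.sum_mul_sum]
      refine sum_congr rfl fun a _ => sum_congr rfl fun b _ => ?_
      rw [← AddChar.map_neg_eq_conj, ← AddChar.map_add_eq_mul]
    rw [Finset.sum_congr rfl (fun ψ _ => step1 ψ), Finset.sum_comm]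
    have step2 : ∀ a ∈ D, ∑ ψ : AddChar G ℂ, ∑ b ∈ D, ψ (a + -b) = (v : ℂ) := by
      intro a ha
      rw [Finset.sum_comm]
      have h3 : ∀ b ∈ D, ∑ ψ : AddChar G ℂ, ψ (a + -b)
          = if b = a then ((Fintype.card G : ℕ) : ℂ) else 0 := by
        intro b _
        rw [hcol (a + -b)]
        exact if_congr (add_neg_eq_zero.trans eq_comm) rfl rfl
      rw [Finset.sum_congr rfl h3, Finset.sum_ite_eq' D a (fun _ => ((Fintype.card G : ℕ) : ℂ))]
      simp [ha, hv]
    rw [Finset.sum_congr rfl step2, Finset.sum_const, nsmul_eq_mul]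
    ring
  set c : ℤ := k₀ - lam with hc
  set d : ℤ := 1 - 4 * c with hd
  have hvm : (v : ℤ) = (m : ℤ) ^ 2 := by exact_mod_cast hm
  have hquad : ∀ ψ : AddChar G ℂ, ψ ≠ 0 → X ψ ^ 2 + X ψ + (c : ℂ) = 0 := by
    intro ψ hψ
    have e1 := E1 ψ
    have e2 := E2 ψ
    rw [hGsum ψ hψ] at e1 e2
    linear_combination (X ψ) * e2 - e1
  have hwsq : ∀ ψ : AddChar G ℂ, ψ ≠ 0 → (2 * X ψ + 1) ^ 2 = (d : ℂ) := by
    intro ψ hψ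
    rw [hd]
    push_cast
    linear_combination (4 : ℂ) * hquad ψ hψ
  have hX0 : X 0 = (k : ℂ) := by rw [hXdef]; simp [hk]
  rcases lt_trichotomy d 0 with hdneg | hdzero | hdpos
  · -- complex case
    have hcc : ∀ ψ : AddChar G ℂ, ψ ≠ 0 → X ψ * (starRingEnd ℂ) (X ψ) = (c : ℂ) := by
      intro ψ hψ
      have hq := hquad ψ hψ
      have hw := hwsq ψ hψ
      have hcw : (starRingEnd ℂ) (2 * X ψ + 1) = -(2 * X ψ + 1) := by
        have h1' : ((starRingEnd ℂ) (2 * X ψ + 1)) ^ 2 = (d : ℂ) := by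
          rw [← map_pow, hw, map_intCast]
        have h2' : ((starRingEnd ℂ) (2 * X ψ + 1) - (2 * X ψ + 1)) *
            ((starRingEnd ℂ) (2 * X ψ + 1) + (2 * X ψ + 1)) = 0 := by
          linear_combination h1' - hw
        rcases mul_eq_zero.mp h2' with h3 | h3
        · exfalso
          have heq : (starRingEnd ℂ) (2 * X ψ + 1) = 2 * X ψ + 1 := by
            linear_combination h3
          have him : (2 * X ψ + 1).im = 0 := by
            have h4 := congrArg Complex.im heq
            rw [Complex.conj_im] at h4
            linarith
          have hre : (2 * X ψ + 1).re * (2 * X ψ + 1).re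
              - (2 * X ψ + 1).im * (2 * X ψ + 1).im = (d : ℝ) := by
            have h5 := congrArg Complex.re (hwsq ψ hψ)
            rwa [sq, Complex.mul_re, Complex.intCast_re] at h5
          have hdr : ((d : ℤ) : ℝ) < 0 := by exact_mod_cast hdneg
          nlinarith [sq_nonneg ((2 * X ψ + 1).re)]
        · linear_combination h3
      have hconjx : (starRingEnd ℂ) (X ψ) = -1 - X ψ := by
        have hC : (starRingEnd ℂ) (2 * X ψ + 1) = 2 * (starRingEnd ℂ) (X ψ) + 1 := by
          rw [map_add, map_mul, map_one, map_ofNat]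
        rw [hC] at hcw
        linear_combination (1 / 2 : ℂ) * hcw
      rw [hconjx]
      linear_combination -hq
    have hsplit := Finset.add_sum_erase (univ : Finset (AddChar G ℂ))
      (fun ψ => X ψ * (starRingEnd ℂ) (X ψ)) (mem_univ (0 : AddChar G ℂ))
    have herase : ∑ ψ ∈ (univ : Finset (AddChar G ℂ)).erase 0,
        (X ψ * (starRingEnd ℂ) (X ψ)) = ((v : ℂ) - 1) * c := by
      rw [Finset.sum_congr rfl (fun ψ hψ => hcc ψ (Finset.ne_of_mem_erase hψ))]
      rw [Finset.sum_const, Finset.card_erase_of_mem (mem_univ _), card_univ, hcard,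
        nsmul_eq_mul]
      congr 1
      have h1le : 1 ≤ v := by omega
      push_cast [Nat.cast_sub h1le]
      ring
    rw [hpar, hX0, herase] at hsplit
    have hZ : (k : ℤ) * k + ((v : ℤ) - 1) * c = (v : ℤ) * k := by
      have hcast2 : (((k : ℤ) * k + ((v : ℤ) - 1) * c : ℤ) : ℂ)
          = (((v : ℤ) * k : ℤ) : ℂ) := by
        push_cast
        rw [map_natCast] at hsplit
        linear_combination hsplit
      exact_mod_cast hcast2
    have key : (k : ℤ) * (2 * c - ((k : ℤ) + 1)) = 0 := by
      linear_combination hZ + ((k : ℤ) - c) * hkv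
    have hkne : (k : ℤ) ≠ 0 := by exact_mod_cast hk0
    have h2c : 2 * c = (k : ℤ) + 1 := by
      rcases mul_eq_zero.mp key with h | h
      · exact absurd h hkne
      · linarith
    rcases Nat.even_or_odd m with ⟨j, hj⟩ | ⟨j, hj⟩
    · have hJ : ∃ J : ℕ, v = 4 * J := ⟨j * j, by rw [hm, hj]; ring⟩
      obtain ⟨J, hJ⟩ := hJ
      omega
    · have hJ : ∃ J : ℕ, v = 4 * J + 1 := ⟨j * j + j, by rw [hm, hj]; ring⟩
      obtain ⟨J, hJ⟩ := hJ
      omega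
  · omega
  · -- real case
    have hrc : ∀ ψ : AddChar G ℂ, ψ ≠ 0 →
        X ψ * (starRingEnd ℂ) (X ψ) = - X ψ - (c : ℂ) := by
      intro ψ hψ
      have hq := hquad ψ hψ
      have hw := hwsq ψ hψ
      have hre : (2 * X ψ + 1).re * (2 * X ψ + 1).re
          - (2 * X ψ + 1).im * (2 * X ψ + 1).im = (d : ℝ) := by
        have h5 := congrArg Complex.re hw
        rwa [sq, Complex.mul_re, Complex.intCast_re] at h5
      have him2 : (2 * X ψ + 1).re * (2 * X ψ + 1).im
          + (2 * X ψ + 1).im * (2 * X ψ + 1).re = 0 := by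
        have h5 := congrArg Complex.im hw
        rwa [sq, Complex.mul_im, Complex.intCast_im] at h5
      have him : (2 * X ψ + 1).im = 0 := by
        have h6 : (2 * X ψ + 1).re * (2 * X ψ + 1).im = 0 := by linarith
        rcases mul_eq_zero.mp h6 with h | h
        · exfalso
          have hdr : (0 : ℝ) < ((d : ℤ) : ℝ) := by exact_mod_cast hdpos
          rw [h] at hre
          nlinarith [sq_nonneg ((2 * X ψ + 1).im)]
        · exact h
      have hxim : (X ψ).im = 0 := by
        have h5 : (2 * X ψ + 1).im = 2 * (X ψ).im := by
          simp [Complex.add_im, Complex.mul_im]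
        rw [h5] at him
        linarith
      have hconjx : (starRingEnd ℂ) (X ψ) = X ψ := Complex.conj_eq_iff_im.mpr hxim
      rw [hconjx]
      linear_combination hq
    have hXs : ∑ ψ : AddChar G ℂ, X ψ = 0 := by
      rw [hXdef, Finset.sum_comm]
      rw [Finset.sum_congr rfl (fun g (_ : g ∈ D) => hcol g),
        Finset.sum_ite_eq' D (0 : G) (fun _ => ((Fintype.card G : ℕ) : ℂ))]
      simp [h0D]
    have hsplitX := Finset.add_sum_erase (univ : Finset (AddChar G ℂ)) X
      (mem_univ (0 : AddChar G ℂ))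
    rw [hXs, hX0] at hsplitX
    have hsplit := Finset.add_sum_erase (univ : Finset (AddChar G ℂ))
      (fun ψ => X ψ * (starRingEnd ℂ) (X ψ)) (mem_univ (0 : AddChar G ℂ))
    have herase : ∑ ψ ∈ (univ : Finset (AddChar G ℂ)).erase 0,
        (X ψ * (starRingEnd ℂ) (X ψ)) = (k : ℂ) - ((v : ℂ) - 1) * c := by
      rw [Finset.sum_congr rfl (fun ψ hψ => hrc ψ (Finset.ne_of_mem_erase hψ))]
      rw [Finset.sum_sub_distrib, Finset.sum_neg_distrib]
      have hXe : ∑ ψ ∈ (univ : Finset (AddChar G ℂ)).erase 0, X ψ = -(k : ℂ) := by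
        linear_combination hsplitX
      rw [hXe, Finset.sum_const, Finset.card_erase_of_mem (mem_univ _), card_univ, hcard,
        nsmul_eq_mul]
      have h1le : 1 ≤ v := by omega
      push_cast [Nat.cast_sub h1le]
      ring
    rw [hpar, hX0, herase] at hsplit
    have hZ : (k : ℤ) * k + ((k : ℤ) - ((v : ℤ) - 1) * c) = (v : ℤ) * k := by
      have hcast2 : (((k : ℤ) * k + ((k : ℤ) - ((v : ℤ) - 1) * c) : ℤ) : ℂ)
          = (((v : ℤ) * k : ℤ) : ℂ) := by
        push_cast
        rw [map_natCast] at hsplit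
        linear_combination hsplit
      exact_mod_cast hcast2
    have key : (k : ℤ) * ((k : ℤ) + 2 * c) = 0 := by
      linear_combination -hZ - ((c : ℤ) + (k : ℤ)) * hkv
    have hkne : (k : ℤ) ≠ 0 := by exact_mod_cast hk0
    have h2c : (k : ℤ) + 2 * c = 0 := by
      rcases mul_eq_zero.mp key with h | h
      · exact absurd h hkne
      · exact h
    have hdv : d = (v : ℤ) := by omega
    have hv3 : 1 < Fintype.card (AddChar G ℂ) := by rw [hcard]; omega
    obtain ⟨ψ, hψ⟩ := Fintype.exists_ne_of_one_lt_card hv3 0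
    have hq := hquad ψ hψ
    have hw := hwsq ψ hψ
    have hdm : (d : ℂ) = ((m : ℕ) : ℂ) ^ 2 := by
      rw [hdv, hvm]
      push_cast
      ring
    have hfact : (2 * X ψ + 1 - ((m : ℕ) : ℂ)) * (2 * X ψ + 1 + ((m : ℕ) : ℂ)) = 0 := by
      linear_combination hw + hdm
    have hXq : ∃ q : ℚ, X ψ = (q : ℂ) := by
      rcases mul_eq_zero.mp hfact with hwm | hwm
      · exact ⟨((m : ℚ) - 1) / 2, by push_cast; linear_combination (1 / 2 : ℂ) * hwm⟩
      · exact ⟨(-(m : ℚ) - 1) / 2, by push_cast; linear_combination (1 / 2 : ℂ) * hwm⟩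
    obtain ⟨q, hXq⟩ := hXq
    have hroots : ∀ g ∈ D, ψ g ^ N = 1 := by
      intro g _
      rw [← AddChar.map_nsmul_eq_pow, hNsmul, AddChar.map_zero_eq_one]
    have hgal := sum_pow_eq_of_rational hNne hco D (fun g => ψ g) hroots q hXq
    have hYX : Y ψ = X ψ := by
      rw [hYdef]
      calc ∑ g ∈ D, ψ (n₀ • g) = ∑ g ∈ D, ψ g ^ n' := by
            refine sum_congr rfl fun g _ => ?_
            rw [hsmul g, AddChar.map_nsmul_eq_pow]
        _ = (q : ℂ) := hgal
        _ = X ψ := hXq.symm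
    have e2 := E2 ψ
    rw [hGsum ψ hψ] at e2
    have hw0 : 2 * X ψ + 1 = 0 := by
      have : X ψ + Y ψ = 0 - 1 := e2
      rw [hYX] at this
      linear_combination this
    have hm0 : ((m : ℕ) : ℂ) ^ 2 = 0 := by
      linear_combination -hfact + (2 * X ψ + 1) * hw0 + hw + hdm - hw - hdm
    have hmz : m = 0 := by
      have : ((m : ℕ) : ℂ) = 0 := by
        exact pow_eq_zero_iff (n := 2) (by norm_num) |>.mp hm0
      exact_mod_cast this
    rw [hmz] at hm
    simp at hm
    omega
end

section
/- Let G be an abelian p-group of order p^β (p odd) and D a QRS in G. If p^k divides the difference coefficient d_G(χ, D) for every nonprincipal character χ of G, then 2k + 1 ≤ β. -/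
open Finset

lemma aux_not_int_half : ¬ IsIntegral ℤ ((-1 : ℂ)/2) := by
  intro h
  have heq : algebraMap ℚ ℂ ((-1 : ℚ)/2) = (-1 : ℂ)/2 := by push_cast; norm_num
  have h2 : IsIntegral ℤ ((-1 : ℚ)/2) := by
    rw [← isIntegral_algebraMap_iff (algebraMap ℚ ℂ).injective, heq]; exact h
  obtain ⟨y, hy⟩ := IsIntegrallyClosed.isIntegral_iff.mp h2
  have h3 : (y : ℚ) = -1/2 := by rwa [eq_intCast] at hy
  have h4 : ((2 * y : ℤ) : ℚ) = ((-1 : ℤ) : ℚ) := by push_cast; linarith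
  have h5 : (2 * y : ℤ) = -1 := by exact_mod_cast h4
  omega

lemma aux_root_int {x : ℂ} {n : ℕ} (hn : n ≠ 0) (hx : x ^ n = 1) : IsIntegral ℤ x :=
  ⟨Polynomial.X ^ n - Polynomial.C 1, Polynomial.monic_X_pow_sub_C 1 hn, by simp [hx]⟩

/-- If D is a QRS in an abelian p-group G of order p^β (p odd) and p^k
divides the difference coefficient d_G(χ,D) for every nonprincipal character χ, then
2k + 1 ≤ β. -/
theorem stmt_14 (p s β k : ℕ) (hp : p.Prime) (hodd : Odd p)
    (G : Type) [AddCommGroup G] [Fintype G]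
    (hcard : Fintype.card G = p ^ β)
    (hexp : AddMonoid.exponent G = p ^ s)
    (D : Finset G) (n₀ : ℤ)
    (hunit : IsUnit (n₀ : ZMod (p ^ s)))
    (hnres : ¬ ∃ m : ZMod (p ^ s), m ^ 2 = (n₀ : ZMod (p ^ s)))
    (hskew : DS 1 D + DS n₀ D = GS G - 1)
    (hinv : ∀ n : ℤ, IsUnit (n : ZMod (p ^ s)) →
      (∃ m : ZMod (p ^ s), m ^ 2 = (n : ZMod (p ^ s))) → DS n D = DS 1 D)
    (d : AddChar G ℂ → ℤ) (s0 : ℂ)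
    (hs0 : s0 ^ 2 = (-1 : ℂ) ^ ((p - 1) / 2) * p)
    (hd : ∀ χ : AddChar G ℂ, (∃ g : G, χ g ≠ 1) →
      (∑ g ∈ D, χ g) = (-1 + (d χ : ℂ) * s0) / 2)
    (hdiv : ∀ χ : AddChar G ℂ, (∃ g : G, χ g ≠ 1) → (p : ℤ) ^ k ∣ d χ) :
    2 * k + 1 ≤ β := by
  classical
  have hp1 : 1 < p := hp.one_lt
  set N := Fintype.card G with hN
  rcases Nat.lt_or_ge N 2 with hN1 | hN2
  · -- trivial group: contradiction with hnres
    exfalso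
    have hNone : N = 1 := le_antisymm (by omega) Fintype.card_pos
    have hdvd : AddMonoid.exponent G ∣ N := AddGroup.exponent_dvd_card
    have hexp1 : p ^ s = 1 := by
      rw [← hexp]; exact Nat.dvd_one.mp (hNone ▸ hdvd)
    apply hnres
    haveI : Subsingleton (ZMod (p ^ s)) := by rw [hexp1]; infer_instance
    exact ⟨0, Subsingleton.elim _ _⟩
  -- Coefficient functions
  set A : G → ℤ := fun g => if g ∈ D then 1 else 0 with hA
  set B : G → ℤ := fun g => (DS n₀ D).coeff g with hB
  have coeff_DS : ∀ (n : ℤ) (g : G),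
      (DS n D).coeff g = ∑ h ∈ D, (if n • h = g then (1 : ℤ) else 0) := by
    intro n g
    rw [DS, AddMonoidAlgebra.coeff_sum]; simp only [AddMonoidAlgebra.coeff_single]
    rw [Finsupp.finset_sum_apply]
    exact Finset.sum_congr rfl fun h _ => Finsupp.single_apply
  have coeff_GS : ∀ g : G, (GS G).coeff g = 1 := by
    intro g
    rw [GS, AddMonoidAlgebra.coeff_sum]; simp only [AddMonoidAlgebra.coeff_single]
    rw [Finsupp.finset_sum_apply]
    simp [Finsupp.single_apply]
  have coeff_one : ∀ g : G, (1 : AddMonoidAlgebra ℤ G).coeff g = if g = 0 then 1 else 0 := by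
    intro g
    rw [AddMonoidAlgebra.one_def]
    show Finsupp.single (0 : G) (1 : ℤ) g = _
    rw [Finsupp.single_apply]
    simp [eq_comm]
  have hDS1 : ∀ g : G, (DS 1 D).coeff g = A g := by
    intro g
    rw [coeff_DS, hA]
    simp [one_smul]
  have hBnn : ∀ g : G, 0 ≤ B g := by
    intro g
    rw [hB]
    simp only
    rw [coeff_DS]
    apply Finset.sum_nonneg
    intro h _
    split <;> norm_num
  have hAB : ∀ g : G, A g + B g = if g = 0 then 0 else 1 := by
    intro g
    have h0 := congrArg (fun f : AddMonoidAlgebra ℤ G => f.coeff g) hskew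
    have hl : (DS 1 D + DS n₀ D).coeff g = (DS 1 D).coeff g + (DS n₀ D).coeff g := rfl
    have hr : (GS G - 1).coeff g = (GS G).coeff g - (1 : AddMonoidAlgebra ℤ G).coeff g := rfl
    rw [hl, hr, coeff_GS, coeff_one, hDS1] at h0
    rw [h0]
    split <;> ring
  have hAval : ∀ g : G, A g = 0 ∨ A g = 1 := by
    intro g; rw [hA]; simp only; split <;> simp
  set c : G → ℤ := fun g => A g - B g with hc
  have hc2 : ∀ g : G, c g ^ 2 = if g = 0 then 0 else 1 := by
    intro g
    have h1 := hAB g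
    have h2 := hBnn g
    have h3 := hAval g
    by_cases hg : g = 0
    · rw [if_pos hg] at h1 ⊢
      have hA0 : A g = 0 := by rcases h3 with h3 | h3 <;> omega
      have hB0 : B g = 0 := by omega
      simp [hc, hA0, hB0]
    · rw [if_neg hg] at h1 ⊢
      rcases h3 with h3 | h3
      · have h4 : B g = 1 := by omega
        norm_num [hc, h3, h4]
      · have h4 : B g = 0 := by omega
        norm_num [hc, h3, h4]
  have hsumA : ∑ g : G, A g = (D.card : ℤ) := by
    rw [hA]; simp
  have hsumB : ∑ g : G, B g = (D.card : ℤ) := by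
    simp only [hB, coeff_DS]
    rw [Finset.sum_comm]
    simp
  have hcsum : ∑ g : G, c g = 0 := by
    simp only [hc, Finset.sum_sub_distrib, hsumA, hsumB, sub_self]
  have hc2sum : ∑ g : G, c g ^ 2 = (N : ℤ) - 1 := by
    rw [Finset.sum_congr rfl fun g _ => hc2 g]
    have h1 : ∑ g : G, (if g = 0 then (0:ℤ) else 1)
        = ∑ g : G, (1 - if g = 0 then (1:ℤ) else 0) := by
      apply Finset.sum_congr rfl; intro g _; split <;> ring
    rw [h1, Finset.sum_sub_distrib]
    simp [hN, Finset.sum_ite_eq' Finset.univ (0:G) (fun _ => (1:ℤ))]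
  -- Fourier transform of c
  set T : AddChar G ℂ → ℂ := fun χ => ∑ g : G, (c g : ℂ) * χ g with hT
  have hT0 : T 0 = 0 := by
    have : ((∑ g : G, c g : ℤ) : ℂ) = 0 := by rw [hcsum]; simp
    simpa [hT, AddChar.zero_apply, Int.cast_sum] using this
  have hTval : ∀ χ : AddChar G ℂ, χ ≠ 0 → T χ = (d χ : ℂ) * s0 := by
    intro χ hχ
    have hne : ∃ g : G, χ g ≠ 1 := AddChar.ne_zero_iff.mp hχ
    have hS := hd χ hne
    have hsum0 : ∑ g : G, χ g = 0 := AddChar.sum_eq_zero_iff_ne_zero.mpr hχ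
    have hcval : ∀ g : G, (c g : ℂ)
        = 2 * (if g ∈ D then (1:ℂ) else 0) - (if g = 0 then (0:ℂ) else 1) := by
      intro g
      have h1 := hAB g
      have h2 : c g = 2 * A g - (A g + B g) := by rw [hc]; ring
      rw [h1] at h2
      rw [h2, hA]
      simp only
      split <;> split <;> norm_num
    calc T χ = ∑ g : G,
          (2 * (if g ∈ D then (1:ℂ) else 0) - (if g = 0 then (0:ℂ) else 1)) * χ g := by
          apply Finset.sum_congr rfl; intro g _; rw [hcval g]
      _ = 2 * (∑ g : G, (if g ∈ D then (1:ℂ) else 0) * χ g)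
            - ∑ g : G, (if g = 0 then (0:ℂ) else 1) * χ g := by
          rw [Finset.mul_sum, ← Finset.sum_sub_distrib]
          apply Finset.sum_congr rfl; intro g _; ring
      _ = 2 * (∑ g ∈ D, χ g) - (∑ g : G, χ g - χ 0) := by
          congr 1
          · congr 1
            have h5 : ∀ g : G, (if g ∈ D then (1:ℂ) else 0) * χ g
                = if g ∈ D then χ g else 0 := by intro g; split <;> ring
            rw [Finset.sum_congr rfl fun g _ => h5 g, ← Finset.sum_filter]
            congr 1
            simp
          · have h6 : ∀ g : G, (if g = 0 then (0:ℂ) else 1) * χ g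
                = χ g - (if g = 0 then χ g else 0) := by
              intro g; split <;> ring
            rw [Finset.sum_congr rfl fun g _ => h6 g, Finset.sum_sub_distrib]
            congr 1
            rw [Finset.sum_ite_eq' Finset.univ (0:G) (fun g => χ g)]
            simp
      _ = (d χ : ℂ) * s0 := by
          rw [hS, hsum0, AddChar.map_zero_eq_one]
          ring
  -- |s0|^2 = p
  have hs0conj : s0 * (starRingEnd ℂ) s0 = (p : ℂ) := by
    have habs : ‖s0‖ ^ 2 = (p : ℝ) := by
      have h1 := congrArg (‖·‖) hs0
      rw [norm_pow, norm_mul, norm_pow] at h1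
      simpa using h1
    rw [Complex.mul_conj, ← Complex.sq_norm, habs]
    simp
  -- Parseval
  have parseval : ∑ χ : AddChar G ℂ, T χ * (starRingEnd ℂ) (T χ)
      = (N : ℂ) * ((N : ℂ) - 1) := by
    have conjT : ∀ χ : AddChar G ℂ, (starRingEnd ℂ) (T χ) = ∑ h : G, (c h : ℂ) * χ (-h) := by
      intro χ
      rw [hT]
      simp only [map_sum, map_mul]
      apply Finset.sum_congr rfl; intro h _
      rw [AddChar.map_neg_eq_conj]
      congr 1
      simp
    calc ∑ χ : AddChar G ℂ, T χ * (starRingEnd ℂ) (T χ)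
        = ∑ χ : AddChar G ℂ, ∑ g : G, ∑ h : G, (c g : ℂ) * (c h : ℂ) * χ (g - h) := by
          apply Finset.sum_congr rfl; intro χ _
          rw [conjT, hT, Finset.sum_mul_sum]
          apply Finset.sum_congr rfl; intro g _
          apply Finset.sum_congr rfl; intro h _
          rw [sub_eq_add_neg, AddChar.map_add_eq_mul]
          ring
      _ = ∑ g : G, ∑ h : G, (c g : ℂ) * (c h : ℂ) * (if g - h = 0 then (N : ℂ) else 0) := by
          rw [Finset.sum_comm]
          apply Finset.sum_congr rfl; intro g _
          rw [Finset.sum_comm]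
          apply Finset.sum_congr rfl; intro h _
          rw [← Finset.mul_sum, AddChar.sum_apply_eq_ite]
      _ = ∑ g : G, (c g : ℂ) ^ 2 * (N : ℂ) := by
          apply Finset.sum_congr rfl; intro g _
          rw [Finset.sum_eq_single g]
          · rw [sub_self, if_pos rfl]; ring
          · intro h _ hh
            have hne0 : g - h ≠ 0 := sub_ne_zero.mpr (Ne.symm hh)
            rw [if_neg hne0, mul_zero]
          · intro habs; exact absurd (Finset.mem_univ g) habs
      _ = (N : ℂ) * ((N : ℂ) - 1) := by
          rw [← Finset.sum_mul]
          have h7 : ∑ g : G, (c g : ℂ) ^ 2 = ((∑ g : G, c g ^ 2 : ℤ) : ℂ) := by push_cast; rfl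
          rw [h7, hc2sum]
          push_cast
          ring
  -- split off the principal character
  have hsplit : ∑ χ : AddChar G ℂ, T χ * (starRingEnd ℂ) (T χ)
      = ∑ χ ∈ Finset.univ.erase (0 : AddChar G ℂ), (d χ : ℂ)^2 * (p : ℂ) := by
    rw [← Finset.add_sum_erase _ _ (Finset.mem_univ (0 : AddChar G ℂ))]
    rw [hT0]
    simp only [map_zero, zero_mul, zero_add]
    apply Finset.sum_congr rfl
    intro χ hχ
    have hχ0 : χ ≠ 0 := (Finset.mem_erase.mp hχ).1
    rw [hTval χ hχ0, map_mul, map_intCast]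
    calc (d χ : ℂ) * s0 * ((d χ : ℂ) * (starRingEnd ℂ) s0)
        = (d χ : ℂ)^2 * (s0 * (starRingEnd ℂ) s0) := by ring
      _ = (d χ : ℂ)^2 * (p : ℂ) := by rw [hs0conj]
  have main : (p : ℤ) * ∑ χ ∈ Finset.univ.erase (0 : AddChar G ℂ), (d χ)^2
      = (N : ℤ) * ((N : ℤ) - 1) := by
    have h1 : (((p : ℤ) * ∑ χ ∈ Finset.univ.erase (0 : AddChar G ℂ), (d χ)^2 : ℤ) : ℂ)
        = (((N : ℤ) * ((N : ℤ) - 1) : ℤ) : ℂ) := by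
      push_cast
      calc (p : ℂ) * ∑ χ ∈ Finset.univ.erase (0 : AddChar G ℂ), (d χ : ℂ)^2
          = ∑ χ ∈ Finset.univ.erase (0 : AddChar G ℂ), (d χ : ℂ)^2 * (p : ℂ) := by
            rw [mul_comm, Finset.sum_mul]
        _ = (N : ℂ) * ((N : ℂ) - 1) := by rw [← hsplit, parseval]
    exact_mod_cast h1
  -- each d χ is nonzero
  have hpow_ne : (p : ℕ) ^ s ≠ 0 := by positivity
  have hdne : ∀ χ : AddChar G ℂ, χ ≠ 0 → d χ ≠ 0 := by
    intro χ hχ h0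
    have hne : ∃ g : G, χ g ≠ 1 := AddChar.ne_zero_iff.mp hχ
    have hS := hd χ hne
    rw [h0] at hS
    have hS' : ∑ g ∈ D, χ g = (-1 : ℂ)/2 := by rw [hS]; push_cast; ring
    have hint : IsIntegral ℤ (∑ g ∈ D, χ g) := by
      have hmem : ∀ g ∈ D, (χ g) ∈ integralClosure ℤ ℂ := by
        intro g _
        have hroot : χ g ^ (p ^ s) = 1 := by
          rw [← AddChar.map_nsmul_eq_pow, ← hexp, AddMonoid.exponent_nsmul_eq_zero,
            AddChar.map_zero_eq_one]
        exact aux_root_int hpow_ne hroot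
      exact Subalgebra.sum_mem _ hmem
    rw [hS'] at hint
    exact aux_not_int_half hint
  -- counting
  have hcard_char : (Finset.univ.erase (0 : AddChar G ℂ)).card = N - 1 := by
    rw [Finset.card_erase_of_mem (Finset.mem_univ _), Finset.card_univ, AddChar.card_eq]
  have hterm : ∀ χ ∈ Finset.univ.erase (0 : AddChar G ℂ), (p:ℤ)^(2*k) ≤ (d χ)^2 := by
    intro χ hχ
    have hχ0 : χ ≠ 0 := (Finset.mem_erase.mp hχ).1
    have hne : ∃ g : G, χ g ≠ 1 := AddChar.ne_zero_iff.mp hχ0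
    have h1 : (p:ℤ)^k ≤ |d χ| :=
      Int.le_of_dvd (abs_pos.mpr (hdne χ hχ0)) ((dvd_abs _ _).mpr (hdiv χ hne))
    calc (p:ℤ)^(2*k) = ((p:ℤ)^k)^2 := pow_mul' (p:ℤ) 2 k
      _ ≤ |d χ|^2 := by apply pow_le_pow_left₀ (by positivity) h1
      _ = (d χ)^2 := sq_abs _
  have hlow : ((N:ℤ) - 1) * (p:ℤ)^(2*k)
      ≤ ∑ χ ∈ Finset.univ.erase (0 : AddChar G ℂ), (d χ)^2 := by
    have h2 := Finset.card_nsmul_le_sum (Finset.univ.erase (0 : AddChar G ℂ)) _ _ hterm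
    rwa [hcard_char, nsmul_eq_mul, Nat.cast_sub (by omega), Nat.cast_one] at h2
  have hfin : (p:ℤ)^(2*k+1) ≤ (N:ℤ) := by
    have hNpos : (0:ℤ) < (N:ℤ) - 1 := by
      have : (2:ℤ) ≤ (N:ℤ) := by exact_mod_cast hN2
      linarith
    have h2 : (p:ℤ)^(2*k+1) * ((N:ℤ)-1) ≤ (N:ℤ) * ((N:ℤ)-1) := by
      calc (p:ℤ)^(2*k+1) * ((N:ℤ)-1) = (p:ℤ) * (((N:ℤ)-1) * (p:ℤ)^(2*k)) := by
            rw [pow_succ]; ring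
        _ ≤ (p:ℤ) * ∑ χ ∈ Finset.univ.erase (0 : AddChar G ℂ), (d χ)^2 := by
            apply mul_le_mul_of_nonneg_left hlow (by positivity)
        _ = (N:ℤ) * ((N:ℤ)-1) := main
    exact le_of_mul_le_mul_right h2 hNpos
  have hfinN : p^(2*k+1) ≤ N := by exact_mod_cast hfin
  rw [hcard] at hfinN
  exact (Nat.pow_le_pow_iff_right hp1).mp hfinN
end

section
/- Let G be an abelian p-group of order p^{2α+1} (p odd) and D a QRS in G. Then D is a GSHDS if and only if p^α divides d_G(χ, D) for every nonprincipal character χ; in that case d_G(χ,D) = ±p^α for all nonprincipal χ. -/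
open Finset

noncomputable def evalAt {G : Type} [AddCommGroup G] (χ : AddChar G ℂ) :
    AddMonoidAlgebra ℤ G →ₐ[ℤ] ℂ :=
  AddMonoidAlgebra.lift ℤ ℂ G χ.toMonoidHom

lemma evalAt_single {G : Type} [AddCommGroup G] (χ : AddChar G ℂ) (a : G) :
    evalAt χ (AddMonoidAlgebra.single a 1) = χ a := by
  simp [evalAt, AddMonoidAlgebra.lift_single]

lemma evalAt_DS {G : Type} [AddCommGroup G] (χ : AddChar G ℂ) (n : ℤ) (D : Finset G) :
    evalAt χ (DS n D) = ∑ g ∈ D, χ (n • g) := by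
  simp [DS, map_sum, evalAt_single]

lemma evalAt_GS {G : Type} [AddCommGroup G] [Fintype G] (χ : AddChar G ℂ) :
    evalAt χ (GS G) = ∑ g : G, χ g := by
  simp [GS, map_sum, evalAt_single]

lemma evalAt_eq_sum {G : Type} [AddCommGroup G] [Fintype G] (χ : AddChar G ℂ)
    (f : AddMonoidAlgebra ℤ G) :
    evalAt χ f = ∑ a : G, (f.coeff a : ℂ) * χ a := by
  rw [evalAt, AddMonoidAlgebra.lift_apply, Finsupp.sum_fintype]
  · simp [zsmul_eq_mul]
  · intro a; simp

lemma evalAt_injective {G : Type} [AddCommGroup G] [Fintype G]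
    (f : AddMonoidAlgebra ℤ G) (h : ∀ χ : AddChar G ℂ, evalAt χ f = 0) : f = 0 := by
  classical
  ext b
  have h1 : ∑ χ : AddChar G ℂ, ∑ a : G, (f.coeff a : ℂ) * χ (a - b) = 0 := by
    refine Finset.sum_eq_zero fun χ _ => ?_
    have hχ := h χ
    rw [evalAt_eq_sum] at hχ
    have : ∑ a : G, (f.coeff a : ℂ) * χ (a - b) = (∑ a : G, (f.coeff a : ℂ) * χ a) * χ (-b) := by
      rw [Finset.sum_mul]
      refine Finset.sum_congr rfl fun a _ => ?_
      rw [mul_assoc, ← AddChar.map_add_eq_mul, sub_eq_add_neg]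
    rw [this, hχ, zero_mul]
  rw [Finset.sum_comm] at h1
  simp_rw [← Finset.mul_sum, AddChar.sum_apply_eq_ite, sub_eq_zero] at h1
  simp only [mul_ite, mul_zero, Finset.sum_ite_eq' Finset.univ b, Finset.mem_univ,
    if_true] at h1
  have hb : (f.coeff b : ℂ) = 0 := by
    rcases mul_eq_zero.mp h1 with h' | h'
    · exact h'
    · exact absurd h' (Nat.cast_ne_zero.2 Fintype.card_ne_zero)
  exact_mod_cast hb

lemma neg_half_not_integral : ¬ IsIntegral ℤ ((-1 : ℂ) / 2) := by
  intro h
  have heq : ((-1 : ℂ) / 2) = algebraMap ℚ ℂ ((-1 : ℚ) / 2) := by norm_num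
  rw [heq] at h
  have h2 : IsIntegral ℤ ((-1 : ℚ) / 2) :=
    (isIntegral_algebraMap_iff (algebraMap ℚ ℂ).injective).mp h
  obtain ⟨y, hy⟩ := IsIntegrallyClosed.isIntegral_iff.mp h2
  have : (y : ℚ) * 2 = -1 := by
    rw [show ((y:ℚ)) = (-1:ℚ)/2 from hy]; ring
  have : (y * 2 : ℤ) = (-1 : ℤ) := by exact_mod_cast this
  omega

lemma char_sum_integral {G : Type} [AddCommGroup G] [Fintype G] (χ : AddChar G ℂ)
    (D : Finset G) : IsIntegral ℤ (∑ g ∈ D, χ g) := by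
  have hint : ∀ g : G, IsIntegral ℤ (χ g) := by
    intro g
    have hpow : (χ g) ^ Fintype.card G = 1 := by
      rw [← AddChar.map_nsmul_eq_pow, card_nsmul_eq_zero, AddChar.map_zero_eq_one]
    refine ⟨Polynomial.X ^ Fintype.card G - Polynomial.C 1, ?_, ?_⟩
    · exact Polynomial.monic_X_pow_sub_C 1 Fintype.card_ne_zero
    · simp [Polynomial.eval₂_sub, hpow]
  exact IsIntegral.sum _ fun g _ => hint g

set_option maxHeartbeats 1000000 in
/-- A QRS D in an abelian p-group G of order p^{2α+1} (p odd) is a GSHDS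
if and only if p^α divides d_G(χ,D) for every nonprincipal χ; in that case
d_G(χ,D) = ±p^α for all nonprincipal χ. -/
theorem stmt_15 (p s α : ℕ) (hp : p.Prime) (hodd : Odd p)
    (G : Type) [AddCommGroup G] [Fintype G]
    (hcard : Fintype.card G = p ^ (2 * α + 1))
    (hexp : AddMonoid.exponent G = p ^ s)
    (D : Finset G) (n₀ : ℤ)
    (hunit : IsUnit (n₀ : ZMod (p ^ s)))
    (hnres : ¬ ∃ m : ZMod (p ^ s), m ^ 2 = (n₀ : ZMod (p ^ s)))
    (hskew : DS 1 D + DS n₀ D = GS G - 1)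
    (hinv : ∀ n : ℤ, IsUnit (n : ZMod (p ^ s)) →
      (∃ m : ZMod (p ^ s), m ^ 2 = (n : ZMod (p ^ s))) → DS n D = DS 1 D)
    (d : AddChar G ℂ → ℤ) (s0 : ℂ)
    (hs0 : s0 ^ 2 = (-1 : ℂ) ^ ((p - 1) / 2) * p)
    (hd : ∀ χ : AddChar G ℂ, (∃ g : G, χ g ≠ 1) →
      (∑ g ∈ D, χ g) = (-1 + (d χ : ℂ) * s0) / 2)
    (ε v k₀ lam : ℤ)
    (hε : ε = (-1 : ℤ) ^ ((p - 1) / 2))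
    (hv : v = (p : ℤ) ^ (2 * α + 1))
    (hk₀ : k₀ = ((1 - ε) / 2) * ((v - 1) / 2))
    (hlam : lam = (v - 2 + ε) / 4) :
    ((DS 1 D * DS n₀ D
        = (k₀ - lam) • (1 : AddMonoidAlgebra ℤ G) + lam • GS G) ↔
      (∀ χ : AddChar G ℂ, (∃ g : G, χ g ≠ 1) → (p : ℤ) ^ α ∣ d χ)) ∧
    ((∀ χ : AddChar G ℂ, (∃ g : G, χ g ≠ 1) → (p : ℤ) ^ α ∣ d χ) →
      ∀ χ : AddChar G ℂ, (∃ g : G, χ g ≠ 1) →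
        d χ = (p : ℤ) ^ α ∨ d χ = -((p : ℤ) ^ α)) := by
  classical
  have hp3 : 3 ≤ p := by
    rcases hodd with ⟨m, hm⟩
    have := hp.two_le
    omega
  have hp4 : p % 4 = 1 ∨ p % 4 = 3 := by
    rcases hodd with ⟨m, hm⟩; omega
  have hεv : (ε = 1 ∧ v % 4 = 1) ∨ (ε = -1 ∧ v % 4 = 3) := by
    rcases hp4 with h1 | h3
    · left
      constructor
      · have he : Even ((p - 1) / 2) := ⟨(p - 1) / 4, by omega⟩
        rw [hε, he.neg_one_pow]
      · have hm : (p : ℤ) ≡ 1 [ZMOD 4] := by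
          unfold Int.ModEq; omega
        have hv4 : v ≡ 1 [ZMOD 4] := by
          rw [hv]
          calc ((p : ℤ)) ^ (2 * α + 1) ≡ 1 ^ (2 * α + 1) [ZMOD 4] := hm.pow _
            _ = 1 := one_pow _
        unfold Int.ModEq at hv4; omega
    · right
      constructor
      · have he : Odd ((p - 1) / 2) := ⟨(p - 3) / 4, by omega⟩
        rw [hε, he.neg_one_pow]
      · have hm : (p : ℤ) ≡ -1 [ZMOD 4] := by
          unfold Int.ModEq; omega
        have hodd' : Odd (2 * α + 1) := ⟨α, by ring⟩
        have hv4 : v ≡ -1 [ZMOD 4] := by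
          rw [hv]
          calc ((p : ℤ)) ^ (2 * α + 1) ≡ (-1) ^ (2 * α + 1) [ZMOD 4] := hm.pow _
            _ = -1 := hodd'.neg_one_pow
        unfold Int.ModEq at hv4; omega
  have hε1 : ε = 1 ∨ ε = -1 := by rcases hεv with ⟨h, _⟩ | ⟨h, _⟩ <;> [left; right] <;> exact h
  have F2 : 4 * lam = v - 2 + ε := by
    rcases hεv with ⟨h1, h2⟩ | ⟨h1, h2⟩ <;> omega
  have F1 : 4 * k₀ = (1 - ε) * (v - 1) := by
    rcases hεv with ⟨h1, h2⟩ | ⟨h1, h2⟩ <;> subst h1 <;> rw [hk₀] <;> norm_num <;> omega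
  have hppos : (0 : ℤ) < p := by exact_mod_cast hp.pos
  have hvpos : (0 : ℤ) < v := by rw [hv]; positivity
  have hvfac : v = (p : ℤ) * ((p : ℤ) ^ α) ^ 2 := by rw [hv]; ring
  have hvnat : ((Fintype.card G : ℕ) : ℤ) = v := by
    rw [hcard, hv]; push_cast; ring
  have hvC : ((Fintype.card G : ℕ) : ℂ) = ((v : ℤ) : ℂ) := by exact_mod_cast hvnat
  have hεs0 : s0 ^ 2 = ((ε : ℤ) : ℂ) * p := by
    rw [hs0, hε]; push_cast; ring
  -- |D| via the principal character
  have hk : 2 * (D.card : ℤ) = v - 1 := by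
    have h0 := congrArg (evalAt (0 : AddChar G ℂ)) hskew
    rw [map_add, map_sub, map_one, evalAt_DS, evalAt_DS, evalAt_GS] at h0
    simp only [AddChar.zero_apply, Finset.sum_const, nsmul_eq_mul, mul_one] at h0
    have h1 : ((2 * (D.card : ℤ) : ℤ) : ℂ) = ((v - 1 : ℤ) : ℂ) := by
      push_cast
      rw [← hvC]
      rw [Finset.card_univ] at h0
      linear_combination h0
    exact_mod_cast h1
  -- skew relation under nonprincipal characters
  have hA' : ∀ χ : AddChar G ℂ, χ ≠ 0 →
      (∑ g ∈ D, χ g) + (∑ g ∈ D, χ (n₀ • g)) = -1 := by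
    intro χ hχ
    have h0 := congrArg (evalAt χ) hskew
    rw [map_add, map_sub, map_one, evalAt_DS, evalAt_DS, evalAt_GS,
      AddChar.sum_eq_zero_iff_ne_zero.mpr hχ] at h0
    simpa [one_zsmul] using h0
  -- product value at nonprincipal characters
  have hprod : ∀ χ : AddChar G ℂ, χ ≠ 0 →
      evalAt χ (DS 1 D * DS n₀ D) = ((1 - ε * p * (d χ) ^ 2 : ℤ) : ℂ) / 4 := by
    intro χ hχ
    have hne := AddChar.ne_zero_iff.mp hχ
    have hA := hd χ hne
    have hB : (∑ g ∈ D, χ (n₀ • g)) = -1 - ∑ g ∈ D, χ g := by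
      linear_combination hA' χ hχ
    rw [map_mul, evalAt_DS, evalAt_DS]
    simp only [one_zsmul]
    rw [hB, hA]
    push_cast
    linear_combination (-((d χ : ℂ) ^ 2) / 4) * hεs0
  -- d χ ≠ 0
  have hdne : ∀ χ : AddChar G ℂ, χ ≠ 0 → d χ ≠ 0 := by
    intro χ hχ h0
    have hne := AddChar.ne_zero_iff.mp hχ
    have hsum : (∑ g ∈ D, χ g) = (-1 : ℂ) / 2 := by
      rw [hd χ hne, h0]; push_cast; ring
    exact neg_half_not_integral (hsum ▸ char_sum_integral χ D)
  -- Parseval setup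
  set E : Finset (AddChar G ℂ) := Finset.univ.erase (0 : AddChar G ℂ) with hE
  have hcardE : (E.card : ℤ) = v - 1 := by
    rw [hE, Finset.card_erase_of_mem (Finset.mem_univ _), Finset.card_univ, AddChar.card_eq]
    have h1 : 1 ≤ Fintype.card G := Fintype.card_pos
    push_cast [Nat.cast_sub h1]
    omega
  set N : ℕ := ((D ×ˢ D).filter fun q : G × G => q.1 + n₀ • q.2 = 0).card with hN
  have hNle : (N : ℤ) ≤ (D.card : ℤ) := by
    have : N ≤ D.card := by
      apply Finset.card_le_card_of_injOn (fun q => q.2)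
      · intro q hq
        rw [Finset.mem_coe, Finset.mem_filter, Finset.mem_product] at hq
        exact hq.1.2
      · intro q hq q' hq' hqq
        rw [Finset.coe_filter] at hq hq'
        simp only [Set.mem_setOf_eq] at hq hq'
        have h2 : q.2 = q'.2 := hqq
        have h1 : q.1 = q'.1 := by
          have e1 : q.1 = -(n₀ • q.2) := eq_neg_of_add_eq_zero_left hq.2
          have e2 : q'.1 = -(n₀ • q'.2) := eq_neg_of_add_eq_zero_left hq'.2
          rw [e1, e2, h2]
        exact Prod.ext h1 h2
    exact_mod_cast this
  have hstep : ∀ χ : AddChar G ℂ, evalAt χ (DS 1 D * DS n₀ D)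
      = ∑ q ∈ D ×ˢ D, χ (q.1 + n₀ • q.2) := by
    intro χ
    rw [map_mul, evalAt_DS, evalAt_DS, Finset.sum_mul_sum, Finset.sum_product]
    refine Finset.sum_congr rfl fun g _ => Finset.sum_congr rfl fun h _ => ?_
    rw [one_zsmul, ← AddChar.map_add_eq_mul]
  have hsum1 : ∑ χ : AddChar G ℂ, evalAt χ (DS 1 D * DS n₀ D)
      = ((Fintype.card G : ℕ) : ℂ) * N := by
    simp_rw [hstep]
    rw [Finset.sum_comm]
    rw [Finset.sum_congr rfl fun q (_ : q ∈ D ×ˢ D) => AddChar.sum_apply_eq_ite (q.1 + n₀ • q.2)]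
    rw [Finset.sum_ite, Finset.sum_const, Finset.sum_const_zero, add_zero, nsmul_eq_mul, hN]
    ring
  have hsum2 : ∑ χ : AddChar G ℂ, evalAt χ (DS 1 D * DS n₀ D)
      = (D.card : ℂ) ^ 2 + (∑ χ ∈ E, ((1 - ε * p * (d χ) ^ 2 : ℤ) : ℂ)) / 4 := by
    rw [← Finset.add_sum_erase _ _ (Finset.mem_univ (0 : AddChar G ℂ)), ← hE]
    congr 1
    · rw [map_mul, evalAt_DS, evalAt_DS]
      simp [sq]
    · rw [Finset.sum_div]
      exact Finset.sum_congr rfl fun χ hχ => hprod χ (Finset.ne_of_mem_erase hχ)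
  have hParZ : 4 * (D.card : ℤ) ^ 2 + ((E.card : ℤ) - ε * p * (∑ χ ∈ E, (d χ) ^ 2))
      = 4 * v * N := by
    have hcc : ((4 * (D.card : ℤ) ^ 2 + ((E.card : ℤ) - ε * p * (∑ χ ∈ E, (d χ) ^ 2)) : ℤ) : ℂ)
        = ((4 * v * N : ℤ) : ℂ) := by
      have h12 := hsum2.symm.trans hsum1
      rw [hvC] at h12
      push_cast at h12 ⊢
      rw [Finset.sum_sub_distrib, Finset.sum_const, nsmul_eq_mul, mul_one,
        ← Finset.mul_sum] at h12
      linear_combination 4 * h12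
    exact_mod_cast hcc
  -- part 2
  have part2 : (∀ χ : AddChar G ℂ, (∃ g : G, χ g ≠ 1) → (p : ℤ) ^ α ∣ d χ) →
      ∀ χ : AddChar G ℂ, (∃ g : G, χ g ≠ 1) →
        d χ = (p : ℤ) ^ α ∨ d χ = -((p : ℤ) ^ α) := by
    intro hdvd χg hχg
    have hχE : χg ∈ E := Finset.mem_erase.mpr ⟨AddChar.ne_zero_iff.mpr hχg, Finset.mem_univ _⟩
    have hge : ∀ ψ ∈ E, ((p : ℤ) ^ α) ^ 2 ≤ (d ψ) ^ 2 := by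
      intro ψ hψ
      have hψ0 : ψ ≠ 0 := Finset.ne_of_mem_erase hψ
      have h1 : (p : ℤ) ^ α ≤ |d ψ| :=
        Int.le_of_dvd (abs_pos.mpr (hdne ψ hψ0))
          ((dvd_abs _ _).mpr (hdvd ψ (AddChar.ne_zero_iff.mp hψ0)))
      calc ((p : ℤ) ^ α) ^ 2 ≤ |d ψ| ^ 2 := by
            apply pow_le_pow_left₀ (by positivity) h1
        _ = (d ψ) ^ 2 := sq_abs _
    set T : ℤ := ∑ ψ ∈ E, (d ψ) ^ 2 with hT
    have hsum_ge : (v - 1) * ((p : ℤ) ^ α) ^ 2 ≤ T := by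
      have := Finset.card_nsmul_le_sum E (fun ψ => (d ψ) ^ 2) (((p : ℤ) ^ α) ^ 2) hge
      rw [nsmul_eq_mul] at this
      rw [← hcardE]
      exact this
    have h4k : 4 * (D.card : ℤ) ^ 2 = (v - 1) ^ 2 := by rw [← hk]; ring
    have hEq : ε * (p : ℤ) * T = v * (v - 1) - 4 * v * N := by
      linear_combination -hParZ + h4k + hcardE
    have hpT_ge : v * (v - 1) ≤ (p : ℤ) * T := by
      calc v * (v - 1) = (p : ℤ) * ((v - 1) * ((p : ℤ) ^ α) ^ 2) := by rw [hvfac]; ring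
        _ ≤ (p : ℤ) * T := by
            apply mul_le_mul_of_nonneg_left hsum_ge (le_of_lt hppos)
    have hNnn : (0 : ℤ) ≤ (N : ℤ) := Int.natCast_nonneg _
    have hpT_le : (p : ℤ) * T ≤ v * (v - 1) := by
      rcases hε1 with he | he <;> rw [he] at hEq
      · nlinarith
      · nlinarith
    have hpT : (p : ℤ) * T = v * (v - 1) := le_antisymm hpT_le hpT_ge
    have hTeq : T = ((p : ℤ) ^ α) ^ 2 * (v - 1) := by
      have h1 : (p : ℤ) * T = (p : ℤ) * (((p : ℤ) ^ α) ^ 2 * (v - 1)) := by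
        rw [hpT, hvfac]; ring
      exact mul_left_cancel₀ (ne_of_gt hppos) h1
    have hall : (d χg) ^ 2 = ((p : ℤ) ^ α) ^ 2 := by
      by_contra hne
      have hlt : ((p : ℤ) ^ α) ^ 2 < (d χg) ^ 2 := lt_of_le_of_ne (hge _ hχE) (Ne.symm hne)
      have hstrict : ∑ _ψ ∈ E, ((p : ℤ) ^ α) ^ 2 < ∑ ψ ∈ E, (d ψ) ^ 2 :=
        Finset.sum_lt_sum hge ⟨χg, hχE, hlt⟩
      rw [Finset.sum_const, nsmul_eq_mul] at hstrict
      rw [← hT] at hstrict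
      nlinarith [hcardE, hTeq]
    have hfac : (d χg - (p : ℤ) ^ α) * (d χg + (p : ℤ) ^ α) = 0 := by
      linear_combination hall
    rcases mul_eq_zero.mp hfac with h | h
    · left; linarith
    · right; linarith
  refine ⟨⟨?_, ?_⟩, part2⟩
  · -- forward direction
    intro hGS χ hχ
    have hχ0 : χ ≠ 0 := AddChar.ne_zero_iff.mpr hχ
    have h1 := congrArg (evalAt χ) hGS
    rw [hprod χ hχ0, map_add, map_zsmul, map_zsmul, map_one, evalAt_GS,
      AddChar.sum_eq_zero_iff_ne_zero.mpr hχ0] at h1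
    have h2 : ((1 - ε * p * (d χ) ^ 2 : ℤ) : ℂ) = ((4 * (k₀ - lam) : ℤ) : ℂ) := by
      rw [smul_zero, add_zero, zsmul_eq_mul, mul_one] at h1
      have hr : ((4 * (k₀ - lam) : ℤ) : ℂ) = 4 * ((k₀ - lam : ℤ) : ℂ) := by
        push_cast; ring
      rw [hr]
      linear_combination 4 * h1
    have h3 : 1 - ε * (p : ℤ) * (d χ) ^ 2 = 4 * (k₀ - lam) := by exact_mod_cast h2
    have h5 : (p : ℤ) * (d χ) ^ 2 = v := by
      rcases hε1 with he | he <;> rw [he] at h3 <;> nlinarith [F1, F2, h3]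
    have h6 : (d χ) ^ 2 = ((p : ℤ) ^ α) ^ 2 := by
      have h7 : (p : ℤ) * (d χ) ^ 2 = (p : ℤ) * ((p : ℤ) ^ α) ^ 2 := by
        rw [h5, hvfac]
      exact mul_left_cancel₀ (ne_of_gt hppos) h7
    have hfac : (d χ - (p : ℤ) ^ α) * (d χ + (p : ℤ) ^ α) = 0 := by
      linear_combination h6
    rcases mul_eq_zero.mp hfac with h | h
    · exact ⟨1, by linarith⟩
    · exact ⟨-1, by linarith⟩
  · -- backward direction
    intro hdvd
    have hpm := part2 hdvd
    have hzero : ∀ χ : AddChar G ℂ,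
        evalAt χ (DS 1 D * DS n₀ D - ((k₀ - lam) • 1 + lam • GS G)) = 0 := by
      intro χ
      rw [map_sub, map_add, map_zsmul, map_zsmul, map_one]
      by_cases hχ0 : χ = 0
      · subst hχ0
        rw [map_mul, evalAt_DS, evalAt_DS, evalAt_GS]
        simp only [AddChar.zero_apply, Finset.sum_const, nsmul_eq_mul, mul_one]
        have h44 : 4 * ((D.card : ℤ) * (D.card : ℤ)) = 4 * ((k₀ - lam) + lam * v) := by
          linear_combination (2 * (D.card : ℤ) + v - 1) * hk - F1 - (v - 1) * F2
        have hid : (D.card : ℤ) * (D.card : ℤ) = (k₀ - lam) + lam * v := by linarith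
        have hidC : (((D.card : ℤ) * (D.card : ℤ) : ℤ) : ℂ)
            = (((k₀ - lam) + lam * v : ℤ) : ℂ) := by exact_mod_cast hid
        rw [Finset.card_univ, hvC, zsmul_eq_mul, zsmul_eq_mul, mul_one]
        push_cast at hidC ⊢
        linear_combination hidC
      · have hpmd := hpm χ (AddChar.ne_zero_iff.mp hχ0)
        rw [hprod χ hχ0, evalAt_GS, AddChar.sum_eq_zero_iff_ne_zero.mpr hχ0, smul_zero,
          add_zero]
        have hd2 : (d χ) ^ 2 = ((p : ℤ) ^ α) ^ 2 := by
          rcases hpmd with h | h <;> rw [h] <;> ring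
        have hw : 1 - ε * (p : ℤ) * (d χ) ^ 2 = 4 * (k₀ - lam) := by
          rw [hd2]
          linear_combination -F1 + F2 + ε * hvfac
        have hwC : ((1 - ε * (p : ℤ) * (d χ) ^ 2 : ℤ) : ℂ) = ((4 * (k₀ - lam) : ℤ) : ℂ) := by
          exact_mod_cast hw
        rw [zsmul_eq_mul, mul_one, hwC]
        have hr : ((4 * (k₀ - lam) : ℤ) : ℂ) = 4 * ((k₀ - lam : ℤ) : ℂ) := by
          push_cast; ring
        rw [hr]
        ring
    have hfin := evalAt_injective _ hzero
    exact sub_eq_zero.mp hfin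
end

section
/- Let D be a GSHDS in an abelian p-group G with exp(G) = p^s, p odd, and let 0 ≤ k ≤ s−1. Write the integer constants a_{p^k}, b_{p^k} defined by D(x)^{p^k} = c_{p^k}·1 + a_{p^k}D(x) + b_{p^k}D(x^{n₀}) in ℤ[G]. Then a_{p^k} − b_{p^k} = (1/2^{p^k−1}) · Σ_{f=0}^{(p^k−1)/2} C(p^k, 2f+1) · p^{(2α+1)f} · χₚ(−1)^f, where |G| = p^{2α+1}, and the exact power of p dividing a_{p^k} − b_{p^k} is p^k. -/
open Finset

noncomputable instance instCoeFunAMA {G : Type} [AddCommGroup G] :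
    CoeFun (AddMonoidAlgebra ℤ G) (fun _ => G → ℤ) := ⟨fun x => x.coeff⟩

/-- Splitting a sum over `range (2*M)` into even and odd indexed parts. -/
lemma sum_range_two_mul' {M : Type*} [AddCommMonoid M] (g : ℕ → M) (n : ℕ) :
    ∑ j ∈ Finset.range (2 * n), g j
      = ∑ f ∈ Finset.range n, (g (2 * f) + g (2 * f + 1)) := by
  induction n with
  | zero => simp
  | succ n ih =>
    have h : 2 * (n + 1) = (2 * n + 1) + 1 := by ring
    rw [h, Finset.sum_range_succ, Finset.sum_range_succ, ih, Finset.sum_range_succ,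
      add_assoc]

lemma two_mul_add_one_le_three_pow (v : ℕ) : 2 * v + 1 ≤ 3 ^ v := by
  induction v with
  | zero => simp
  | succ v ih =>
    have h : 3 ^ (v + 1) = 3 * 3 ^ v := by rw [pow_succ]; ring
    omega

/-- The key p-adic estimate for the binomial coefficients appearing in the sum. -/
lemma pk_succ_dvd_term (p k F α : ℕ) (hp : p.Prime) (h3 : 3 ≤ p) (hF : 1 ≤ F)
    (hα : 1 ≤ α) (hk : 1 ≤ k) :
    p ^ (k + 1) ∣ (p ^ k).choose (2 * F + 1) * p ^ ((2 * α + 1) * F) := by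
  set j := 2 * F + 1 with hj
  by_cases hjn : j ≤ p ^ k
  · have hC0 : (p ^ k).choose j ≠ 0 := (Nat.choose_pos hjn).ne'
    have hj0 : j ≠ 0 := by omega
    -- p^k ∣ j * choose (p^k) j
    obtain ⟨n', hn'⟩ : ∃ n', p ^ k = n' + 1 :=
      ⟨p ^ k - 1, by have := Nat.one_le_pow k p hp.pos; omega⟩
    have hkey : p ^ k ∣ j * (p ^ k).choose j := by
      have h := Nat.add_one_mul_choose_eq n' (2 * F)
      try simp only [Nat.succ_eq_add_one] at h
      rw [hj, hn', mul_comm (2 * F + 1), ← h]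
      exact dvd_mul_right _ _
    set v := j.factorization p with hv
    have hpvj : p ^ v ∣ j := Nat.ordProj_dvd j p
    have hpvle : p ^ v ≤ j := Nat.le_of_dvd (by omega) hpvj
    have h3v : 3 ^ v ≤ p ^ v := Nat.pow_le_pow_left h3 v
    have hvF : v ≤ F := by
      have := two_mul_add_one_le_three_pow v
      omega
    rcases le_or_gt v k with hvk | hvk
    · -- p^(k-v) divides the binomial coefficient
      have hfac : k ≤ (j * (p ^ k).choose j).factorization p :=
        (Nat.Prime.pow_dvd_iff_le_factorization hp (mul_ne_zero hj0 hC0)).mp hkey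
      have hmul : (j * (p ^ k).choose j).factorization p
          = v + ((p ^ k).choose j).factorization p := by
        rw [Nat.factorization_mul hj0 hC0]; simp [hv]
      have hCge : k - v ≤ ((p ^ k).choose j).factorization p := by omega
      have hCdvd : p ^ (k - v) ∣ (p ^ k).choose j :=
        (Nat.Prime.pow_dvd_iff_le_factorization hp hC0).mpr hCge
      have hexp : p ^ (v + 1) ∣ p ^ ((2 * α + 1) * F) := by
        apply pow_dvd_pow
        have h1 : 3 * F ≤ (2 * α + 1) * F := Nat.mul_le_mul_right F (by omega)
        omega
      have := mul_dvd_mul hCdvd hexp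
      rwa [← pow_add, show k - v + (v + 1) = k + 1 by omega] at this
    · -- v > k : p^(k+1) divides the power of p alone
      apply dvd_mul_of_dvd_right
      apply pow_dvd_pow
      have h1 : 3 * F ≤ (2 * α + 1) * F := Nat.mul_le_mul_right F (by omega)
      omega
  · rw [Nat.choose_eq_zero_of_lt (by omega), zero_mul]
    exact dvd_zero _

set_option maxHeartbeats 1600000 in
/-- For a GSHDS D in an abelian p-group G of order p^{2α+1} and exponent
p^s (p odd), with 0 ≤ k ≤ s−1 and D(x)^{p^k} = c·1 + a·D(x) + b·D(x^{n₀}), one has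
2^{p^k−1}·(a − b) = Σ_{f=0}^{(p^k−1)/2} C(p^k, 2f+1)·p^{(2α+1)f}·χₚ(−1)^f, and the
exact power of p dividing a − b is p^k. -/
theorem stmt_19 (p s α k : ℕ) (hp : p.Prime) (hodd : Odd p) (hks : k ≤ s - 1)
    (G : Type) [AddCommGroup G] [Fintype G]
    (hcard : Fintype.card G = p ^ (2 * α + 1))
    (hexp : AddMonoid.exponent G = p ^ s)
    (D : Finset G) (n₀ k₀ lam : ℤ)
    (hunit : IsUnit (n₀ : ZMod (p ^ s)))
    (hnres : ¬ ∃ m : ZMod (p ^ s), m ^ 2 = (n₀ : ZMod (p ^ s)))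
    (h1 : DS 1 D * DS n₀ D
        = (k₀ - lam) • (1 : AddMonoidAlgebra ℤ G) + lam • GS G)
    (h2 : DS 1 D + DS n₀ D = GS G - 1)
    (a b c : ℤ) (ε : ℤ) (hε : ε = (-1 : ℤ) ^ ((p - 1) / 2))
    (hpow : DS 1 D ^ (p ^ k)
        = c • (1 : AddMonoidAlgebra ℤ G) + a • DS 1 D + b • DS n₀ D) :
    (2 : ℤ) ^ (p ^ k - 1) * (a - b)
      = ∑ f ∈ Finset.range ((p ^ k - 1) / 2 + 1),
          ((p ^ k).choose (2 * f + 1) : ℤ) * (p : ℤ) ^ ((2 * α + 1) * f) * ε ^ f ∧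
    (p : ℤ) ^ k ∣ (a - b) ∧ ¬ (p : ℤ) ^ (k + 1) ∣ (a - b) := by
  classical
  have hp3 : 3 ≤ p := by
    have h2p := hp.two_le
    rcases hodd with ⟨w, hw⟩
    omega
  set n : ℕ := p ^ k with hn
  have hn1 : 1 ≤ n := Nat.one_le_pow k p hp.pos
  have hnodd : Odd n := hodd.pow
  set N : ℤ := (p : ℤ) ^ (2 * α + 1) with hN
  have hNodd : Odd N := by
    apply Odd.pow
    exact_mod_cast hodd
  have hNcard : (Fintype.card G : ℤ) = N := by rw [hcard]; push_cast; ring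
  have hN3 : 3 ≤ N := by
    calc (3 : ℤ) ≤ (p : ℤ) := by exact_mod_cast hp3
    _ ≤ N := le_self_pow₀ (by exact_mod_cast hp.one_le) (by omega)
  set A : AddMonoidAlgebra ℤ G := DS 1 D with hA
  set B : AddMonoidAlgebra ℤ G := DS n₀ D with hB
  set Γ : AddMonoidAlgebra ℤ G := GS G with hΓ
  set θ : AddMonoidAlgebra ℤ G := A - B with hθ
  -- coefficients
  have cA : ∀ g : G, A g = if g ∈ D then 1 else 0 := by
    intro g
    rw [hA]
    show (∑ d ∈ D, AddMonoidAlgebra.single ((1 : ℤ) • d) (1 : ℤ)) g = _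
    simp only [one_zsmul]
    rw [AddMonoidAlgebra.coeff_sum, Finset.sum_apply']
    simp [AddMonoidAlgebra.coeff_single, Finsupp.single_apply, eq_comm]
  have cB0 : ∀ g : G, 0 ≤ B g := by
    intro g
    rw [hB]
    show 0 ≤ (∑ d ∈ D, AddMonoidAlgebra.single (n₀ • d) (1 : ℤ)) g
    rw [AddMonoidAlgebra.coeff_sum, Finset.sum_apply']
    apply Finset.sum_nonneg
    intro i _
    rw [AddMonoidAlgebra.coeff_single, Finsupp.single_apply]
    split <;> norm_num
  have cΓ : ∀ g : G, Γ g = 1 := by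
    intro g
    rw [hΓ]
    show (∑ h : G, AddMonoidAlgebra.single h (1 : ℤ)) g = 1
    rw [AddMonoidAlgebra.coeff_sum, Finset.sum_apply']
    simp [AddMonoidAlgebra.coeff_single, Finsupp.single_apply]
  have c1 : ∀ g : G, (1 : AddMonoidAlgebra ℤ G) g = if g = 0 then 1 else 0 := by
    intro g
    rw [AddMonoidAlgebra.one_def]
    simp [AddMonoidAlgebra.coeff_single, Finsupp.single_apply, eq_comm]
  have h2c : ∀ g : G, A g + B g = if g = 0 then 0 else 1 := by
    intro g
    have e : (A + B) g = (Γ - 1) g := by rw [h2]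
    rw [AddMonoidAlgebra.coeff_add, AddMonoidAlgebra.coeff_sub, Finsupp.add_apply, Finsupp.sub_apply] at e
    rw [e, cΓ g, c1 g]
    split <;> norm_num
  have h0D : (0 : G) ∉ D := by
    intro h0
    have e := h2c 0
    have := cB0 0
    rw [cA 0, if_pos h0, if_pos rfl] at e
    omega
  have cθ0 : θ 0 = 0 := by
    have e := h2c 0
    rw [if_pos rfl] at e
    rw [hθ, AddMonoidAlgebra.coeff_sub, Finsupp.sub_apply]
    have := cB0 0
    have hA0 : A 0 = 0 := by rw [cA 0, if_neg h0D]
    omega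
  have cθD : ∀ g ∈ D, θ g = 1 := by
    intro g hg
    have hg0 : g ≠ 0 := fun h => h0D (h ▸ hg)
    have e := h2c g
    rw [if_neg hg0] at e
    rw [hθ, AddMonoidAlgebra.coeff_sub, Finsupp.sub_apply]
    rw [cA g, if_pos hg] at e ⊢
    omega
  have cθnD : ∀ g : G, g ≠ 0 → g ∉ D → θ g = -1 := by
    intro g hg0 hg
    have e := h2c g
    rw [if_neg hg0] at e
    rw [hθ, AddMonoidAlgebra.coeff_sub, Finsupp.sub_apply]
    rw [cA g, if_neg hg] at e ⊢
    omega
  have cθabs : ∀ g : G, |θ g| ≤ 1 := by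
    intro g
    by_cases hg0 : g = 0
    · rw [hg0, cθ0]; norm_num
    by_cases hg : g ∈ D
    · rw [cθD g hg]; norm_num
    · rw [cθnD g hg0 hg]; norm_num
  -- augmentation map
  set aug : AddMonoidAlgebra ℤ G →ₐ[ℤ] ℤ := AddMonoidAlgebra.lift ℤ ℤ G 1 with haug
  have augsingle : ∀ (g : G) (z : ℤ), aug (AddMonoidAlgebra.single g z) = z := by
    intro g z
    rw [haug, AddMonoidAlgebra.lift_single]
    simp
  have augA : aug A = D.card := by
    rw [hA]
    show aug (∑ d ∈ D, AddMonoidAlgebra.single ((1:ℤ) • d) (1:ℤ)) = _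
    rw [map_sum]
    simp [augsingle]
  have augB : aug B = D.card := by
    rw [hB]
    show aug (∑ d ∈ D, AddMonoidAlgebra.single (n₀ • d) (1:ℤ)) = _
    rw [map_sum]
    simp [augsingle]
  have augΓ : aug Γ = N := by
    rw [hΓ]
    show aug (∑ g : G, AddMonoidAlgebra.single g (1:ℤ)) = _
    rw [map_sum]
    simp only [augsingle]
    rw [Finset.sum_const, Finset.card_univ, nsmul_eq_mul, mul_one]
    exact hNcard
  have E1 : 2 * (D.card : ℤ) = N - 1 := by
    have e := congrArg aug h2
    rw [map_add, map_sub, map_one, augA, augB, augΓ] at e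
    linarith
  have E2 : (D.card : ℤ) * (D.card : ℤ) = (k₀ - lam) + lam * N := by
    have e := congrArg aug h1
    rw [map_mul, map_add, map_zsmul, map_zsmul, map_one, augA, augB, augΓ] at e
    rw [e, smul_eq_mul, smul_eq_mul]
    ring
  -- Γ multiplication facts
  have gΓs : ∀ g : G, Γ * AddMonoidAlgebra.single g (1 : ℤ) = Γ := by
    intro g
    rw [hΓ]
    show (∑ h : G, AddMonoidAlgebra.single h (1:ℤ)) * AddMonoidAlgebra.single g 1 = _
    rw [Finset.sum_mul]
    simp only [AddMonoidAlgebra.single_mul_single, mul_one]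
    exact Fintype.sum_equiv (Equiv.addRight g) _ _ (fun h => rfl)
  have gΓΓ : Γ * Γ = (N : AddMonoidAlgebra ℤ G) * Γ := by
    have : Γ * Γ = ∑ h : G, Γ * AddMonoidAlgebra.single h (1:ℤ) := by
      rw [← Finset.mul_sum]; rfl
    rw [this]
    simp only [gΓs]
    rw [Finset.sum_const, Finset.card_univ, nsmul_eq_mul]
    congr 1
    rw [← hNcard]
    simp
  -- the square of θ
  have θsq : θ ^ 2 = ((1 - 4 * (k₀ - lam) : ℤ) : AddMonoidAlgebra ℤ G)
      + ((N - 2 - 4 * lam : ℤ) : AddMonoidAlgebra ℤ G) * Γ := by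
    have e : θ ^ 2 = (A + B) ^ 2 - 4 * (A * B) := by rw [hθ]; ring
    rw [e, h2, h1]
    simp only [zsmul_eq_mul, mul_one]
    push_cast
    linear_combination gΓΓ
  -- coefficient of θ² at 0, computed two ways
  have coeff1 : (θ ^ 2) 0 = (1 - 4 * (k₀ - lam)) + (N - 2 - 4 * lam) := by
    rw [θsq, AddMonoidAlgebra.coeff_add, Finsupp.add_apply]
    rw [AddMonoidAlgebra.intCast_def, AddMonoidAlgebra.intCast_def]
    rw [AddMonoidAlgebra.coeff_single_mul_apply]
    rw [AddMonoidAlgebra.coeff_single, Finsupp.single_apply, if_pos rfl]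
    rw [neg_zero, zero_add, cΓ 0, mul_one]
    push_cast
    ring
  have θrep : θ = ∑ d ∈ D, (AddMonoidAlgebra.single d (1:ℤ)
      - AddMonoidAlgebra.single (n₀ • d) (1:ℤ)) := by
    rw [hθ, hA, hB]
    show DS 1 D - DS n₀ D = _
    rw [DS, DS, ← Finset.sum_sub_distrib]
    simp [one_zsmul]
  have coeff2 : (θ ^ 2) 0 = ∑ d ∈ D, (θ (-d) - θ (-(n₀ • d))) := by
    have e : θ ^ 2 = ∑ d ∈ D, (AddMonoidAlgebra.single d (1:ℤ) * θ
        - AddMonoidAlgebra.single (n₀ • d) (1:ℤ) * θ) := by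
      rw [pow_two]
      nth_rewrite 1 [θrep]
      rw [Finset.sum_mul]
      exact Finset.sum_congr rfl (fun d _ => sub_mul _ _ _)
    rw [e, AddMonoidAlgebra.coeff_sum, Finset.sum_apply']
    apply Finset.sum_congr rfl
    intro d _
    rw [AddMonoidAlgebra.coeff_sub, Finsupp.sub_apply, AddMonoidAlgebra.coeff_single_mul_apply,
      AddMonoidAlgebra.coeff_single_mul_apply]
    simp
  have bound : |(1 - 4 * (k₀ - lam)) + (N - 2 - 4 * lam)| ≤ N - 1 := by
    rw [← coeff1, coeff2]
    calc |∑ d ∈ D, (θ (-d) - θ (-(n₀ • d)))| ≤ ∑ d ∈ D, |θ (-d) - θ (-(n₀ • d))| :=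
          Finset.abs_sum_le_sum_abs _ _
    _ ≤ ∑ d ∈ D, 2 := by
        apply Finset.sum_le_sum
        intro d _
        have h1' := cθabs (-d)
        have h2' := cθabs (-(n₀ • d))
        have := abs_sub (θ (-d)) (θ (-(n₀ • d)))
        omega
    _ = 2 * (D.card : ℤ) := by rw [Finset.sum_const]; push_cast; ring
    _ = N - 1 := E1
  -- determine t = ε
  set t : ℤ := 4 * lam + 2 - N with ht
  have htm : 1 - 4 * (k₀ - lam) = N * t := by
    rw [ht]
    linear_combination (-(2 * (D.card : ℤ)) - N + 1) * E1 + 4 * E2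
  have hbt : |(N - 1) * t| ≤ N - 1 := by
    have h' : (1 - 4 * (k₀ - lam)) + (N - 2 - 4 * lam) = (N - 1) * t := by
      rw [htm, ht]; ring
    rwa [h'] at bound
  have htpm : t = 1 ∨ t = -1 := by
    rw [abs_mul] at hbt
    have hN1 : |N - (1:ℤ)| = N - 1 := abs_of_nonneg (by omega)
    rw [hN1] at hbt
    have habs : |t| ≤ 1 := by nlinarith [abs_nonneg t]
    have := abs_le.mp habs
    obtain ⟨w, hw⟩ := hNodd
    omega
  have hp4 : p % 4 = 1 ∨ p % 4 = 3 := by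
    obtain ⟨w, hw⟩ := hodd
    omega
  have hNmod : N % 4 = p % 4 := by
    rcases hp4 with h4 | h4
    · have hmod : (p : ℤ) ≡ 1 [ZMOD 4] := by
        show (p : ℤ) % 4 = 1 % 4
        omega
      have hpowmod := hmod.pow (2 * α + 1)
      rw [one_pow] at hpowmod
      have h' : N % 4 = 1 % 4 := hpowmod
      omega
    · have hmod : (p : ℤ) ≡ -1 [ZMOD 4] := by
        show (p : ℤ) % 4 = (-1) % 4
        omega
      have hpowmod := hmod.pow (2 * α + 1)
      rw [(odd_two_mul_add_one α).neg_one_pow] at hpowmod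
      have h' : N % 4 = (-1) % 4 := hpowmod
      omega
  have hεt : t = ε := by
    rcases hp4 with h4 | h4
    · obtain ⟨w, hw⟩ : ∃ w, p = 4 * w + 1 := ⟨p / 4, by omega⟩
      have hhalf : (p - 1) / 2 = 2 * w := by omega
      have hε1 : ε = 1 := by
        rw [hε, hhalf, pow_mul, neg_one_sq, one_pow]
      rw [hε1]
      rcases htpm with h | h
      · exact h
      · exfalso; omega
    · obtain ⟨w, hw⟩ : ∃ w, p = 4 * w + 3 := ⟨p / 4, by omega⟩
      have hhalf : (p - 1) / 2 = 2 * w + 1 := by omega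
      have hε1 : ε = -1 := by
        rw [hε, hhalf, (odd_two_mul_add_one w).neg_one_pow]
      rw [hε1]
      rcases htpm with h | h
      · exfalso; omega
      · exact h
  have hm : 1 - 4 * (k₀ - lam) = N * ε := by rw [htm, hεt]
  -- quotient by the ideal generated by Γ
  set I : Ideal (AddMonoidAlgebra ℤ G) := Ideal.span {Γ} with hI
  set π := Ideal.Quotient.mk I with hπ
  have hπΓ : π Γ = 0 := Ideal.Quotient.eq_zero_iff_mem.mpr
    (hI ▸ Ideal.mem_span_singleton_self Γ)
  set T := π θ with hT
  set m' : ℤ := N * ε with hm'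
  have hT2 : T ^ 2 = ((m' : ℤ) : AddMonoidAlgebra ℤ G ⧸ I) := by
    have e : π (θ ^ 2) = π (((1 - 4 * (k₀ - lam) : ℤ) : AddMonoidAlgebra ℤ G)
        + ((N - 2 - 4 * lam : ℤ) : AddMonoidAlgebra ℤ G) * Γ) := congrArg π θsq
    rw [map_add, map_mul, map_intCast, map_intCast, hπΓ, mul_zero, add_zero,
      map_pow] at e
    rw [hT, e, hm, hm']
  have h2A : (2 : AddMonoidAlgebra ℤ G) * A = Γ - 1 + θ := by
    rw [hθ]
    linear_combination h2
  have e1 : 2 * π A = -1 + T := by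
    have e := congrArg π h2A
    rw [map_mul, map_add, map_sub, map_one, hπΓ, zero_sub] at e
    rw [hT, ← e, map_ofNat]
  have e2 : 2 * π B = -1 - T := by
    have e := congrArg π h2
    rw [map_add, map_sub, map_one, hπΓ, zero_sub] at e
    have hπB : π B = -1 - π A := by linear_combination e
    have eθ : T = π A - π B := by rw [hT, hθ, map_sub]
    rw [hπB, eθ, hπB]
    ring
  have e4 : (π A) ^ n = (c : AddMonoidAlgebra ℤ G ⧸ I) + a * π A + b * π B := by
    have e := congrArg π hpow
    rw [map_pow] at e
    rw [e, map_add, map_add, map_zsmul, map_zsmul, map_zsmul, map_one]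
    simp only [zsmul_eq_mul]
    push_cast
    ring
  -- binomial expansion in the quotient
  set M : ℕ := (n - 1) / 2 + 1 with hM
  have hn2M : n + 1 = 2 * M := by
    obtain ⟨w, hw⟩ := hnodd
    omega
  set S₀ : ℤ := ∑ f ∈ Finset.range M, (n.choose (2 * f) : ℤ) * m' ^ f with hS₀
  set S₁ : ℤ := ∑ f ∈ Finset.range M, (n.choose (2 * f + 1) : ℤ) * m' ^ f with hS₁
  have hexpand : (-1 + T) ^ n
      = -((S₀ : ℤ) : AddMonoidAlgebra ℤ G ⧸ I)
        + ((S₁ : ℤ) : AddMonoidAlgebra ℤ G ⧸ I) * T := by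
    rw [add_comm (-1 : AddMonoidAlgebra ℤ G ⧸ I) T, add_pow]
    rw [hn2M, sum_range_two_mul']
    have step : ∀ f ∈ Finset.range M,
        (T ^ (2 * f) * (-1 : AddMonoidAlgebra ℤ G ⧸ I) ^ (n - 2 * f) * (n.choose (2 * f) : AddMonoidAlgebra ℤ G ⧸ I)
          + T ^ (2 * f + 1) * (-1 : AddMonoidAlgebra ℤ G ⧸ I) ^ (n - (2 * f + 1))
            * (n.choose (2 * f + 1) : AddMonoidAlgebra ℤ G ⧸ I))
        = -(((n.choose (2 * f) : ℤ) : AddMonoidAlgebra ℤ G ⧸ I)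
              * ((m' : ℤ) : AddMonoidAlgebra ℤ G ⧸ I) ^ f)
          + (((n.choose (2 * f + 1) : ℤ) : AddMonoidAlgebra ℤ G ⧸ I)
              * ((m' : ℤ) : AddMonoidAlgebra ℤ G ⧸ I) ^ f) * T := by
      intro f hf
      rw [Finset.mem_range] at hf
      have h2f : 2 * f + 1 ≤ n := by omega
      obtain ⟨w, hw⟩ := hnodd
      have hsq : (-1 : AddMonoidAlgebra ℤ G ⧸ I) ^ 2 = 1 := by ring
      have hoddpow : (-1 : AddMonoidAlgebra ℤ G ⧸ I) ^ (n - 2 * f) = -1 := by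
        rw [show n - 2 * f = 2 * ((n - 2 * f - 1) / 2) + 1 by omega, pow_succ,
          pow_mul, hsq, one_pow, one_mul]
      have hevenpow : (-1 : AddMonoidAlgebra ℤ G ⧸ I) ^ (n - (2 * f + 1)) = 1 := by
        rw [show n - (2 * f + 1) = 2 * ((n - (2 * f + 1)) / 2) by omega, pow_mul,
          hsq, one_pow]
      have hTpow : T ^ (2 * f) = ((m' : ℤ) : AddMonoidAlgebra ℤ G ⧸ I) ^ f := by
        rw [pow_mul, hT2]
      have hTpow' : T ^ (2 * f + 1) = ((m' : ℤ) : AddMonoidAlgebra ℤ G ⧸ I) ^ f * T := by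
        rw [pow_succ, hTpow]
      rw [hoddpow, hevenpow, hTpow, hTpow']
      push_cast
      ring
    rw [Finset.sum_congr rfl step, Finset.sum_add_distrib]
    rw [hS₀, hS₁]
    push_cast
    rw [Finset.sum_mul, ← Finset.sum_neg_distrib]
  -- assemble the key linear relation
  set x : ℤ := 2 ^ n * (2 * c - a - b) + 2 * S₀ with hx
  set y : ℤ := 2 ^ n * (a - b) - 2 * S₁ with hy
  have e5 : (2 : AddMonoidAlgebra ℤ G ⧸ I) ^ n * (π A) ^ n = (-1 + T) ^ n := by
    rw [← mul_pow, e1]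
  have key : ((x : ℤ) : AddMonoidAlgebra ℤ G ⧸ I)
      + ((y : ℤ) : AddMonoidAlgebra ℤ G ⧸ I) * T = 0 := by
    rw [hx, hy]
    push_cast
    linear_combination (2 : AddMonoidAlgebra ℤ G ⧸ I) * e5 + 2 * hexpand
      - 2 ^ (n + 1) * e4
      - ((2 : AddMonoidAlgebra ℤ G ⧸ I) ^ n * (a : AddMonoidAlgebra ℤ G ⧸ I)) * e1
      - ((2 : AddMonoidAlgebra ℤ G ⧸ I) ^ n * (b : AddMonoidAlgebra ℤ G ⧸ I)) * e2
  -- linear independence of 1 and θ modulo I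
  have hw0 : π (((x : ℤ) : AddMonoidAlgebra ℤ G)
      + ((y : ℤ) : AddMonoidAlgebra ℤ G) * θ) = 0 := by
    rw [map_add, map_mul, map_intCast, map_intCast, ← hT]
    exact key
  have hmem : ((x : ℤ) : AddMonoidAlgebra ℤ G)
      + ((y : ℤ) : AddMonoidAlgebra ℤ G) * θ ∈ I :=
    Ideal.Quotient.eq_zero_iff_mem.mp hw0
  obtain ⟨r, hr⟩ := Ideal.mem_span_singleton'.mp (hI ▸ hmem)
  have hconst : ∀ g : G, (r * Γ) g = ∑ h : G, r h := by
    intro g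
    have hΓsum : Γ = ∑ h : G, AddMonoidAlgebra.single h (1:ℤ) := hΓ
    rw [hΓsum, Finset.mul_sum, AddMonoidAlgebra.coeff_sum, Finset.sum_apply']
    have hterm : ∀ h : G, (r * AddMonoidAlgebra.single h (1:ℤ)) g = r (g - h) := by
      intro h
      rw [AddMonoidAlgebra.coeff_mul_single_apply, mul_one, sub_eq_add_neg]
    rw [Finset.sum_congr rfl (fun h _ => hterm h)]
    exact Fintype.sum_equiv (Equiv.subLeft g) _ _ (fun h => rfl)
  have hwcoeff : ∀ g : G, (if (0:G) = g then x else 0) + y * θ g = ∑ h : G, r h := by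
    intro g
    rw [← hconst g, hr]
    rw [AddMonoidAlgebra.coeff_add, Finsupp.add_apply]
    congr 1
    · rw [AddMonoidAlgebra.intCast_def, AddMonoidAlgebra.coeff_single, Finsupp.single_apply]
      simp
    · rw [AddMonoidAlgebra.intCast_def, AddMonoidAlgebra.coeff_single_zero_mul]
      simp
  have hDne : D.Nonempty := by
    rw [← Finset.card_pos]
    by_contra h
    have hD0 : D.card = 0 := by omega
    rw [hD0] at E1
    push_cast at E1
    omega
  obtain ⟨gp, hgp⟩ := hDne
  have hgm : ∃ g : G, g ≠ 0 ∧ g ∉ D := by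
    by_contra h
    push_neg at h
    have hsub : Finset.univ ⊆ insert (0:G) D := by
      intro g _
      rcases eq_or_ne g 0 with h0 | h0
      · rw [h0]; exact Finset.mem_insert_self _ _
      · exact Finset.mem_insert_of_mem (h g h0)
    have hcle := Finset.card_le_card hsub
    rw [Finset.card_univ] at hcle
    have hcins := Finset.card_insert_le (0:G) D
    have hc3 : 3 ≤ Fintype.card G := by
      have h1' : (3:ℤ) ≤ (Fintype.card G : ℤ) := by rw [hNcard]; exact hN3
      exact_mod_cast h1'
    have hEc : 2 * (D.card : ℤ) = (Fintype.card G : ℤ) - 1 := by rw [hNcard]; exact E1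
    have hcardeq : 2 * D.card + 1 = Fintype.card G := by omega
    omega
  obtain ⟨gm, hgm0, hgmD⟩ := hgm
  have hy0 : y = 0 := by
    have hgp0 : gp ≠ (0:G) := fun h => h0D (h ▸ hgp)
    have ep := hwcoeff gp
    have em := hwcoeff gm
    rw [if_neg (fun h => hgp0 h.symm), cθD gp hgp, zero_add, mul_one] at ep
    rw [if_neg (fun h => hgm0 h.symm), cθnD gm hgm0 hgmD, zero_add, mul_neg_one] at em
    omega
  -- the main identity
  have hmain : (2:ℤ) ^ (n - 1) * (a - b) = S₁ := by
    have h2n : (2:ℤ) ^ n = 2 * 2 ^ (n - 1) := by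
      rw [← pow_succ']
      congr 1
      omega
    rw [hy, h2n] at hy0
    have hcanc : 2 * ((2:ℤ) ^ (n - 1) * (a - b)) = 2 * S₁ := by linarith
    exact mul_left_cancel₀ two_ne_zero hcanc
  have hgoal1 : (2 : ℤ) ^ (p ^ k - 1) * (a - b)
      = ∑ f ∈ Finset.range ((p ^ k - 1) / 2 + 1),
          ((p ^ k).choose (2 * f + 1) : ℤ) * (p : ℤ) ^ ((2 * α + 1) * f) * ε ^ f := by
    rw [show p ^ k = n from rfl, show (n-1)/2 + 1 = M from rfl, hmain, hS₁]
    apply Finset.sum_congr rfl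
    intro f _
    rw [hm', hN, mul_pow, ← pow_mul]
    ring
  have hcopN : Nat.Coprime p 2 := by
    rcases Nat.coprime_or_dvd_of_prime Nat.prime_two p with hco | hdv
    · exact hco.symm
    · exfalso
      obtain ⟨w, hw⟩ := hodd
      obtain ⟨u, hu⟩ := hdv
      omega
  have hcopZ : IsCoprime ((p : ℤ)) (2 : ℤ) := by
    have h' := Nat.isCoprime_iff_coprime.mpr hcopN
    exact_mod_cast h'
  have hdvds : (p : ℤ) ^ k ∣ (a - b) ∧ ¬ (p : ℤ) ^ (k + 1) ∣ (a - b) := by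
    rcases Nat.eq_zero_or_pos k with hk0 | hk1
    · subst hk0
      have h1' := hgoal1
      norm_num [Finset.sum_range_one] at h1'
      constructor
      · rw [pow_zero]; exact one_dvd _
      · rw [h1', zero_add, pow_one]
        intro hdvd
        have h3' : (3 : ℤ) ≤ (p : ℤ) := by exact_mod_cast hp3
        have := Int.le_of_dvd one_pos hdvd
        omega
    · have hα1 : 1 ≤ α := by
        have hdvd := AddGroup.exponent_dvd_card (G := G)
        rw [hexp, hcard] at hdvd
        have hs : s ≤ 2 * α + 1 := (Nat.pow_dvd_pow_iff_le_right hp.one_lt).mp hdvd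
        omega
      set SS : ℤ := ∑ f ∈ Finset.range ((p ^ k - 1) / 2 + 1),
          ((p ^ k).choose (2 * f + 1) : ℤ) * (p : ℤ) ^ ((2 * α + 1) * f) * ε ^ f with hSS
      have hterm : ∀ f ∈ Finset.range ((p ^ k - 1) / 2),
          (p : ℤ) ^ (k + 1) ∣ ((p ^ k).choose (2 * (f + 1) + 1) : ℤ)
            * (p : ℤ) ^ ((2 * α + 1) * (f + 1)) * ε ^ (f + 1) := by
        intro f _
        apply dvd_mul_of_dvd_left
        have hnat := pk_succ_dvd_term p k (f + 1) α hp hp3 (by omega) hα1 (by omega)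
        have hint := Int.natCast_dvd_natCast.mpr hnat
        push_cast at hint
        exact hint
      have hsplit : SS = (∑ f ∈ Finset.range ((p ^ k - 1) / 2),
          ((p ^ k).choose (2 * (f + 1) + 1) : ℤ) * (p : ℤ) ^ ((2 * α + 1) * (f + 1))
            * ε ^ (f + 1)) + (p : ℤ) ^ k := by
        rw [hSS, Finset.sum_range_succ']
        congr 1
        norm_num [Nat.choose_one_right]
      have hrest : (p : ℤ) ^ (k + 1) ∣ ∑ f ∈ Finset.range ((p ^ k - 1) / 2),
          ((p ^ k).choose (2 * (f + 1) + 1) : ℤ) * (p : ℤ) ^ ((2 * α + 1) * (f + 1))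
            * ε ^ (f + 1) := Finset.dvd_sum hterm
      have hpk_dvd_SS : (p : ℤ) ^ k ∣ SS := by
        rw [hsplit]
        exact dvd_add ((pow_dvd_pow (p : ℤ) (Nat.le_succ k)).trans hrest) dvd_rfl
      have hnot : ¬ (p : ℤ) ^ (k + 1) ∣ SS := by
        intro hdd
        rw [hsplit] at hdd
        have hpp : (p : ℤ) ^ (k + 1) ∣ (p : ℤ) ^ k := (dvd_add_right hrest).mp hdd
        have hppn : p ^ (k + 1) ∣ p ^ k := by exact_mod_cast hpp
        have hle := (Nat.pow_dvd_pow_iff_le_right hp.one_lt).mp hppn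
        omega
      constructor
      · have hd : (p : ℤ) ^ k ∣ (2 : ℤ) ^ (p ^ k - 1) * (a - b) := by
          rw [hgoal1]; exact hpk_dvd_SS
        exact (hcopZ.pow).dvd_of_dvd_mul_left hd
      · intro hdd
        apply hnot
        have hmm := hdd.mul_left ((2 : ℤ) ^ (p ^ k - 1))
        rwa [hgoal1] at hmm
  exact ⟨hgoal1, hdvds.1, hdvds.2⟩
end
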